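/- arXiv:1508.01688 — 8 statements merged into one kernel-verified Lean document; each statement's English description precedes it below -/
import Mathlib

section
/- For n ≥ 1, the number of sequences (d_0,...,d_n) of nonnegative integers satisfying d_0+⋯+d_n = n, d_0+⋯+d_{i-1} ≥ i for all i in {1,...,n}, and d_i ≤ 1 for all i in {1,...,n}, equals 2^{n-1}. -/
/-- `d` is the multi-degree sequence of a plane tree with `n+1` nodes:
`d_0 + ⋯ + d_n = n` and `d_0 + ⋯ + d_{i-1} ≥ i` for all `i ∈ {1,…,n}`
(entries beyond index `n` vanish). -/
def IsTreeDeg (n : ℕ) (d : ℕ → ℕ) : Prop :=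
  (∀ i, n < i → d i = 0) ∧ (∑ i ∈ Finset.range (n + 1), d i = n) ∧
    (∀ i, 1 ≤ i → i ≤ n → i ≤ ∑ j ∈ Finset.range i, d j)

namespace TreeDegAux

variable (n : ℕ)

def g (S : Finset ℕ) : ℕ → ℕ :=
  fun i => if i = 0 then n - S.card else if i ∈ S then 1 else 0

lemma g_sum (S : Finset ℕ) (hS : S ⊆ Finset.Icc 1 (n - 1)) (m : ℕ) (hm : 1 ≤ m) :
    ∑ i ∈ Finset.range m, g n S i = (n - S.card) + (S.filter (fun j => j < m)).card := by
  rw [Finset.range_eq_Ico, Finset.sum_eq_sum_Ico_succ_bot (by omega : (0:ℕ) < m)]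
  have h1 : ∀ i ∈ Finset.Ico 1 m, g n S i = if i ∈ S then 1 else 0 := by
    intro i hi
    simp only [Finset.mem_Ico] at hi
    simp only [g]
    rw [if_neg (by omega : ¬ i = 0)]
  rw [Finset.sum_congr rfl h1, Finset.sum_ite_mem]
  have h2 : Finset.Ico 1 m ∩ S = S.filter (fun j => j < m) := by
    ext j
    simp only [Finset.mem_inter, Finset.mem_Ico, Finset.mem_filter]
    constructor
    · rintro ⟨⟨_, h⟩, hj⟩; exact ⟨hj, h⟩
    · rintro ⟨hj, h⟩
      have := hS hj
      simp only [Finset.mem_Icc] at this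
      exact ⟨⟨this.1, h⟩, hj⟩
  rw [h2]
  simp [g]

lemma card_le (S : Finset ℕ) (hS : S ⊆ Finset.Icc 1 (n - 1)) : S.card ≤ n - 1 := by
  have := Finset.card_le_card hS
  simpa [Nat.card_Icc] using this

lemma tail_card_le (hn : 1 ≤ n) (S : Finset ℕ) (hS : S ⊆ Finset.Icc 1 (n - 1)) (i : ℕ) :
    (S.filter (fun j => ¬ j < i)).card ≤ n - i := by
  have hsub : S.filter (fun j => ¬ j < i) ⊆ Finset.Icc i (n - 1) := by
    intro j hj
    simp only [Finset.mem_filter] at hj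
    have := hS hj.1
    simp only [Finset.mem_Icc] at this ⊢
    omega
  have := Finset.card_le_card hsub
  rw [Nat.card_Icc] at this
  omega

lemma g_isTreeDeg (hn : 1 ≤ n) (S : Finset ℕ) (hS : S ⊆ Finset.Icc 1 (n - 1)) :
    IsTreeDeg n (g n S) ∧ ∀ i, 1 ≤ i → i ≤ n → g n S i ≤ 1 := by
  have hcard := card_le n S hS
  refine ⟨⟨?_, ?_, ?_⟩, ?_⟩
  · intro i hi
    have : i ∉ S := by
      intro h; have := hS h; simp only [Finset.mem_Icc] at this; omega
    simp only [g]
    rw [if_neg (by omega : ¬ i = 0), if_neg this]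
  · rw [g_sum n S hS (n + 1) (by omega)]
    have : S.filter (fun j => j < n + 1) = S := by
      apply Finset.filter_true_of_mem
      intro j hj
      have := hS hj; simp only [Finset.mem_Icc] at this; omega
    rw [this]; omega
  · intro i hi hin
    rw [g_sum n S hS i hi]
    have h1 := tail_card_le n hn S hS i
    have h2 : (S.filter (fun j => j < i)).card + (S.filter (fun j => ¬ j < i)).card = S.card :=
      Finset.card_filter_add_card_filter_not _
    omega
  · intro i hi _
    simp only [g]
    rw [if_neg (by omega : ¬ i = 0)]
    split <;> omega

lemma d_n_eq_zero (d : ℕ → ℕ) (hd : IsTreeDeg n d) (hn : 1 ≤ n) : d n = 0 := by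
  obtain ⟨_, hsum, hpre⟩ := hd
  have h1 := hpre n hn le_rfl
  rw [Finset.sum_range_succ] at hsum
  omega

lemma sum_eq_filter_card (d : ℕ → ℕ) (hd : IsTreeDeg n d)
    (hle : ∀ i, 1 ≤ i → i ≤ n → d i ≤ 1) (hn : 1 ≤ n) :
    d 0 + ((Finset.Icc 1 (n - 1)).filter (fun i => d i = 1)).card = n := by
  obtain ⟨hz, hsum, hpre⟩ := hd
  have hdn := d_n_eq_zero n d ⟨hz, hsum, hpre⟩ hn
  have key : ∑ i ∈ Finset.range (n + 1), d i
      = d 0 + ∑ i ∈ Finset.Ico 1 (n + 1), d i := by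
    rw [Finset.range_eq_Ico, Finset.sum_eq_sum_Ico_succ_bot (by omega : (0:ℕ) < n + 1)]
  have h2 : ∀ i ∈ Finset.Ico 1 (n + 1), d i = if d i = 1 then 1 else 0 := by
    intro i hi
    simp only [Finset.mem_Ico] at hi
    have := hle i hi.1 (by omega)
    split <;> omega
  rw [key, Finset.sum_congr rfl h2, Finset.sum_boole] at hsum
  have h3 : (Finset.Ico 1 (n + 1)).filter (fun i => d i = 1)
      = (Finset.Icc 1 (n - 1)).filter (fun i => d i = 1) := by
    ext j
    simp only [Finset.mem_filter, Finset.mem_Ico, Finset.mem_Icc]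
    constructor
    · rintro ⟨⟨h1, h2'⟩, h3⟩
      refine ⟨⟨h1, ?_⟩, h3⟩
      by_contra hc
      have : j = n := by omega
      rw [this] at h3; omega
    · rintro ⟨⟨h1, h2'⟩, h3⟩
      exact ⟨⟨h1, by omega⟩, h3⟩
  rw [h3] at hsum
  exact_mod_cast hsum

end TreeDegAux

/-- The modular Catalan number `C_{2,n}` equals `2^{n-1}`: the number of plane trees
with `n+1` nodes whose non-root nodes have degree less than `2`. -/
theorem card_treeDeg_le_one (n : ℕ) (hn : 1 ≤ n) :
    Nat.card {d : ℕ → ℕ // IsTreeDeg n d ∧ ∀ i, 1 ≤ i → i ≤ n → d i ≤ 1} = 2 ^ (n - 1) := by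
  classical
  open TreeDegAux in
  have e : {d : ℕ → ℕ // IsTreeDeg n d ∧ ∀ i, 1 ≤ i → i ≤ n → d i ≤ 1}
      ≃ ↥(Finset.Icc 1 (n - 1)).powerset :=
    { toFun := fun d => ⟨(Finset.Icc 1 (n - 1)).filter (fun i => d.1 i = 1),
        Finset.mem_powerset.mpr (Finset.filter_subset _ _)⟩
      invFun := fun S => ⟨g n S.1,
        g_isTreeDeg n hn S.1 (Finset.mem_powerset.mp S.2)⟩
      left_inv := by
        rintro ⟨d, hd, hle⟩
        ext i
        simp only [g]
        by_cases hi : i = 0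
        · subst hi
          have := sum_eq_filter_card n d hd hle hn
          rw [if_pos rfl]
          omega
        · simp only [if_neg hi]
          by_cases hmem : i ∈ (Finset.Icc 1 (n - 1)).filter (fun i => d i = 1)
          · simp only [if_pos hmem]
            exact (Finset.mem_filter.mp hmem).2.symm
          · simp only [if_neg hmem]
            simp only [Finset.mem_filter, Finset.mem_Icc, not_and] at hmem
            by_cases hbig : n < i
            · exact (hd.1 i hbig).symm
            · by_cases hni : i = n
              · rw [hni]
                exact (d_n_eq_zero n d hd hn).symm
              · have h1 : 1 ≤ i := by omega
                have h2 : i ≤ n - 1 := by omega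
                have := hle i h1 (by omega)
                have := hmem ⟨h1, h2⟩
                omega
      right_inv := by
        rintro ⟨S, hS⟩
        rw [Finset.mem_powerset] at hS
        ext j
        simp only [Finset.mem_filter, Finset.mem_Icc, g]
        constructor
        · rintro ⟨⟨h1, h2⟩, h3⟩
          rw [if_neg (by omega : ¬ j = 0)] at h3
          by_contra hc
          rw [if_neg hc] at h3
          omega
        · intro hj
          have hj2 := hS hj
          simp only [Finset.mem_Icc] at hj2
          refine ⟨hj2, ?_⟩
          rw [if_neg (by omega : ¬ j = 0), if_pos hj] }
  rw [Nat.card_congr e, Nat.card_eq_fintype_card, Fintype.card_coe,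
    Finset.card_powerset, Nat.card_Icc]
  congr 1
end

section
/- For n ≥ 0 and k ≥ 1, the number of sequences (d_0,...,d_n) of nonnegative integers with d_0+⋯+d_n = n, all partial sums d_0+⋯+d_{i-1} ≥ i for i in {1,...,n}, and d_i ≤ k for all i in {0,...,n}, equals (1/(n+1))·Σ_{0 ≤ j ≤ n/(k+1)} (-1)^j·C(n+1,j)·C(2n-j(k+1), n). -/
open Fin.NatCast

open Finset in
lemma card_fixed_sum (m s : ℕ) :
    Nat.card {f : Fin m → ℕ // ∑ i, f i = s} = (m + s - 1).choose s := by
  classical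
  rw [Nat.card_congr (Sym.equivNatSumOfFintype (Fin m) s).symm, Nat.card_eq_fintype_card,
    Sym.card_sym_eq_choose, Fintype.card_fin]

lemma card_forced (m s k : ℕ) (T : Finset (Fin m)) :
    Nat.card {f : Fin m → ℕ // ∑ i, f i = s ∧ ∀ i ∈ T, k + 1 ≤ f i}
      = if T.card * (k + 1) ≤ s then
          (m + (s - T.card * (k + 1)) - 1).choose (s - T.card * (k + 1)) else 0 := by
  classical
  set χ : Fin m → ℕ := fun i => if i ∈ T then k + 1 else 0 with hχdef
  have hχ : ∑ i, χ i = T.card * (k + 1) := by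
    simp [hχdef, Finset.sum_ite_mem, mul_comm]
  split_ifs with hw
  · rw [← card_fixed_sum m (s - T.card * (k + 1))]
    refine Nat.card_congr (Equiv.symm ?_)
    refine ⟨fun g => ⟨fun i => g.1 i + χ i, ?_⟩, fun f => ⟨fun i => f.1 i - χ i, ?_⟩, ?_, ?_⟩
    · constructor
      · rw [Finset.sum_add_distrib, g.2, hχ]
        omega
      · intro i hi
        simp [hχdef, if_pos hi]
    · have hle : ∀ i ∈ Finset.univ, χ i ≤ f.1 i := by
        intro i _
        by_cases hi : i ∈ T
        · simpa [hχdef, if_pos hi] using f.2.2 i hi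
        · simp [hχdef, if_neg hi]
      simp only []
      rw [Finset.sum_tsub_distrib Finset.univ hle, f.2.1, hχ]
    · intro g
      ext i
      simp
    · intro f
      ext i
      have : χ i ≤ f.1 i := by
        by_cases hi : i ∈ T
        · simpa [hχdef, if_pos hi] using f.2.2 i hi
        · simp [hχdef, if_neg hi]
      simpa using Nat.sub_add_cancel this
  · have : IsEmpty {f : Fin m → ℕ // ∑ i, f i = s ∧ ∀ i ∈ T, k + 1 ≤ f i} := by
      refine ⟨fun f => hw ?_⟩
      calc T.card * (k + 1) = ∑ i, χ i := hχ.symm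
        _ ≤ ∑ i, f.1 i := by
            refine Finset.sum_le_sum fun i _ => ?_
            by_cases hi : i ∈ T
            · simpa [hχdef, if_pos hi] using f.2.2 i hi
            · simp [hχdef, if_neg hi]
        _ = s := f.2.1
    exact Nat.card_of_isEmpty

lemma natCard_eq_filter (m s : ℕ) (P : (Fin m → ℕ) → Prop) [DecidablePred P] :
    Nat.card {f : Fin m → ℕ // ∑ i, f i = s ∧ P f}
      = ((Finset.Nat.antidiagonalTuple m s).filter P).card := by
  rw [← Nat.card_eq_finsetCard]
  exact Nat.card_congr (Equiv.subtypeEquivRight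
    (by simp [Finset.Nat.mem_antidiagonalTuple]))

lemma card_bounded_IE (m s k : ℕ) :
    (Nat.card {f : Fin m → ℕ // ∑ i, f i = s ∧ ∀ i, f i ≤ k} : ℤ)
      = ∑ T ∈ (Finset.univ : Finset (Fin m)).powerset, (-1) ^ T.card *
          (Nat.card {f : Fin m → ℕ // ∑ i, f i = s ∧ ∀ i ∈ T, k + 1 ≤ f i} : ℤ) := by
  classical
  set A := Finset.Nat.antidiagonalTuple m s with hA
  have h2 : ∀ T : Finset (Fin m),
      (Nat.card {f : Fin m → ℕ // ∑ i, f i = s ∧ ∀ i ∈ T, k + 1 ≤ f i} : ℤ)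
        = ∑ f ∈ A, if ∀ i ∈ T, k + 1 ≤ f i then (1 : ℤ) else 0 := by
    intro T
    rw [natCard_eq_filter, ← hA, Finset.card_filter]
    push_cast
    exact Finset.sum_congr rfl fun f _ => by split_ifs <;> simp
  rw [natCard_eq_filter, ← hA, Finset.card_filter]
  push_cast
  simp_rw [h2, Finset.mul_sum]
  rw [Finset.sum_comm]
  refine Finset.sum_congr rfl fun f _ => ?_
  have hbad : ∀ T : Finset (Fin m),
      (∀ i ∈ T, k + 1 ≤ f i) ↔ T ⊆ Finset.univ.filter (fun i => k + 1 ≤ f i) := by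
    intro T
    constructor
    · intro h i hi
      simpa [Finset.mem_filter] using h i hi
    · intro h i hi
      exact (Finset.mem_filter.1 (h hi)).2
  calc (if ∀ i, f i ≤ k then (1 : ℤ) else 0)
      = if Finset.univ.filter (fun i => k + 1 ≤ f i) = ∅ then (1 : ℤ) else 0 := by
        congr 1
        simp only [eq_iff_iff, Finset.filter_eq_empty_iff, Finset.mem_univ, true_implies]
        exact ⟨fun h i => by have := h i; omega, fun h i => by have := @h i; omega⟩
    _ = ∑ T ∈ (Finset.univ.filter (fun i => k + 1 ≤ f i)).powerset, (-1 : ℤ) ^ T.card :=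
        (Finset.sum_powerset_neg_one_pow_card).symm
    _ = ∑ T ∈ (Finset.univ : Finset (Fin m)).powerset,
          (-1 : ℤ) ^ T.card * (if ∀ i ∈ T, k + 1 ≤ f i then (1 : ℤ) else 0) := by
        simp_rw [mul_ite, mul_one, mul_zero]
        rw [← Finset.sum_filter]
        refine (Finset.sum_congr ?_ fun _ _ => rfl).symm
        ext T
        simp only [Finset.mem_filter, Finset.mem_powerset, hbad T]
        exact ⟨fun h => h.2, fun h => ⟨h.trans (Finset.filter_subset _ _), h⟩⟩

lemma card_bounded_formula (n k : ℕ) :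
    (Nat.card {f : Fin (n + 1) → ℕ // ∑ i, f i = n ∧ ∀ i, f i ≤ k} : ℤ)
      = ∑ j ∈ Finset.range (n + 2), (-1) ^ j * ((n + 1).choose j : ℤ) *
          (if j * (k + 1) ≤ n then ((2 * n - j * (k + 1)).choose n : ℤ) else 0) := by
  classical
  rw [card_bounded_IE]
  rw [Finset.sum_powerset]
  have hcu : (Finset.univ : Finset (Fin (n + 1))).card = n + 1 := by simp
  rw [hcu]
  refine Finset.sum_congr rfl fun j hj => ?_
  have hterm : ∀ T ∈ Finset.powersetCard j (Finset.univ : Finset (Fin (n + 1))),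
      ((-1 : ℤ) ^ T.card *
        (Nat.card {f : Fin (n + 1) → ℕ // ∑ i, f i = n ∧ ∀ i ∈ T, k + 1 ≤ f i} : ℤ))
      = (-1) ^ j * (if j * (k + 1) ≤ n then ((2 * n - j * (k + 1)).choose n : ℤ) else 0) := by
    intro T hT
    have hTc : T.card = j := (Finset.mem_powersetCard.1 hT).2
    rw [card_forced, hTc]
    congr 1
    split_ifs with hw
    · have h1 : n + 1 + (n - j * (k + 1)) - 1 = 2 * n - j * (k + 1) := by omega
      have h2 : (2 * n - j * (k + 1)) - n = n - j * (k + 1) := by omega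
      rw [h1, ← h2, Nat.choose_symm (by omega)]
    · simp
  rw [Finset.sum_congr rfl hterm, Finset.sum_const, Finset.card_powersetCard, hcu]
  push_cast
  ring

open Finset in
/-- Prefix sums of the periodic extension of `v`. -/
def Pre (n : ℕ) (v : Fin (n + 1) → ℕ) (t : ℕ) : ℕ :=
  ∑ j ∈ Finset.range t, v (j : Fin (n + 1))

lemma Pre_window (n : ℕ) (v : Fin (n + 1) → ℕ) (r : Fin (n + 1)) (i : ℕ) :
    Pre n v (r.val + i) = Pre n v r.val + ∑ j ∈ Finset.range i, v ((j : Fin (n + 1)) + r) := by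
  unfold Pre
  rw [Finset.sum_range_add]
  congr 1
  refine Finset.sum_congr rfl fun j _ => ?_
  congr 1
  push_cast
  exact add_comm _ _

lemma Pre_period (n : ℕ) (v : Fin (n + 1) → ℕ) (hv : ∑ i, v i = n) (t : ℕ) :
    Pre n v (t + (n + 1)) = Pre n v t + n := by
  unfold Pre
  rw [Finset.sum_range_add]
  congr 1
  calc ∑ j ∈ Finset.range (n + 1), v ((t + j : ℕ) : Fin (n + 1))
      = ∑ j : Fin (n + 1), v ((t : Fin (n + 1)) + j) := by
        rw [← Fin.sum_univ_eq_sum_range (fun j => v ((t + j : ℕ) : Fin (n + 1))) (n + 1)]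
        refine Finset.sum_congr rfl fun j _ => ?_
        congr 1
        push_cast
        rfl
    _ = ∑ j, v j := Fintype.sum_equiv (Equiv.addLeft ((t : Fin (n + 1)))) _ _ (fun j => rfl)
    _ = n := hv

/-- The height function `L t = Pre t - t`; it decreases by 1 every period. -/
def Ht (n : ℕ) (v : Fin (n + 1) → ℕ) (t : ℕ) : ℤ := (Pre n v t : ℤ) - t

lemma Ht_period (n : ℕ) (v : Fin (n + 1) → ℕ) (hv : ∑ i, v i = n) (t : ℕ) :
    Ht n v (t + (n + 1)) = Ht n v t - 1 := by
  unfold Ht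
  rw [Pre_period n v hv t]
  push_cast
  ring

/-- `v` is "good at `r`": the rotation of `v` by `r` is dominated. -/
def GoodAt (n : ℕ) (v : Fin (n + 1) → ℕ) (r : Fin (n + 1)) : Prop :=
  ∀ i : ℕ, 1 ≤ i → i ≤ n → i ≤ ∑ j ∈ Finset.range i, v ((j : Fin (n + 1)) + r)

lemma goodAt_iff (n : ℕ) (v : Fin (n + 1) → ℕ) (r : Fin (n + 1)) :
    GoodAt n v r ↔ ∀ i : ℕ, 1 ≤ i → i ≤ n → Ht n v r.val ≤ Ht n v (r.val + i) := by
  unfold GoodAt Ht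
  refine forall_congr' fun i => imp_congr_right fun _ => imp_congr_right fun _ => ?_
  have hw := Pre_window n v r i
  omega

/-- The cycle lemma: every sequence of total sum `n` on `ℤ/(n+1)` has a unique
rotation which is dominated. -/
lemma existsUnique_goodAt (n : ℕ) (v : Fin (n + 1) → ℕ) (hv : ∑ i, v i = n) :
    ∃! r : Fin (n + 1), GoodAt n v r := by
  have hQ : ∃ r, r < n + 1 ∧ ∀ t < n + 1, Ht n v r ≤ Ht n v t := by
    obtain ⟨r, hr, hmin⟩ := Finset.exists_min_image (Finset.range (n+1)) (Ht n v) ⟨0, by simp⟩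
    exact ⟨r, Finset.mem_range.1 hr, fun t ht => hmin t (Finset.mem_range.2 ht)⟩
  classical
  set r := Nat.find hQ with hr
  obtain ⟨hrm, hmin⟩ := Nat.find_spec hQ
  rw [← hr] at hrm hmin
  have hstrict : ∀ t < r, Ht n v r < Ht n v t := by
    intro t ht
    have h1 : Ht n v r ≤ Ht n v t := hmin t (ht.trans hrm)
    rcases lt_or_eq_of_le h1 with h | h
    · exact h
    · exact absurd ⟨ht.trans hrm, fun t' ht' => h ▸ hmin t' ht'⟩ (Nat.find_min hQ ht)
  refine ⟨⟨r, hrm⟩, ?_, ?_⟩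
  · show GoodAt n v ⟨r, hrm⟩
    rw [goodAt_iff]
    intro i h1 hi
    show Ht n v r ≤ Ht n v (r + i)
    by_cases hlt : r + i < n + 1
    · exact hmin _ hlt
    · have ht : r + i - (n+1) < r := by omega
      have h2 := Int.add_one_le_iff.mpr (hstrict _ ht)
      have h3 : r + i - (n+1) + (n+1) = r + i := by omega
      have heq := Ht_period n v hv (r + i - (n+1))
      rw [h3] at heq
      omega
  · intro r' hg'
    rw [goodAt_iff] at hg'
    have hr'm : r'.val < n + 1 := r'.isLt
    rcases lt_trichotomy r'.val r with h | h | h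
    · exfalso
      have hi : Ht n v r'.val ≤ Ht n v (r'.val + (r - r'.val)) := by
        refine hg' _ (by omega) (by omega)
      rw [show r'.val + (r - r'.val) = r by omega] at hi
      exact absurd hi (not_le.mpr (hstrict _ h))
    · exact Fin.ext h
    · exfalso
      have hi : Ht n v r'.val ≤ Ht n v (r'.val + (r + (n+1) - r'.val)) := by
        refine hg' _ (by omega) (by omega)
      rw [show r'.val + (r + (n+1) - r'.val) = r + (n+1) by omega, Ht_period n v hv] at hi
      have := hmin r'.val hr'm
      omega

lemma cycle_count (n k : ℕ) :
    Nat.card {f : Fin (n + 1) → ℕ // ∑ i, f i = n ∧ ∀ i, f i ≤ k}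
      = (n + 1) * Nat.card {w : Fin (n + 1) → ℕ //
          (∑ i, w i = n ∧ ∀ i, w i ≤ k) ∧
          ∀ i : ℕ, 1 ≤ i → i ≤ n → i ≤ ∑ j ∈ Finset.range i, w (j : Fin (n + 1))} := by
  classical
  have E : (Fin (n + 1) × {w : Fin (n + 1) → ℕ //
      (∑ i, w i = n ∧ ∀ i, w i ≤ k) ∧
      ∀ i : ℕ, 1 ≤ i → i ≤ n → i ≤ ∑ j ∈ Finset.range i, w (j : Fin (n + 1))})
      ≃ {f : Fin (n + 1) → ℕ // ∑ i, f i = n ∧ ∀ i, f i ≤ k} := by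
    refine ⟨fun p => ⟨fun i => p.2.1 (i - p.1), ?_, fun i => p.2.2.1.2 _⟩,
      fun f => ⟨(existsUnique_goodAt n f.1 f.2.1).choose,
        ⟨fun i => f.1 (i + (existsUnique_goodAt n f.1 f.2.1).choose), ⟨?_, fun i => f.2.2 _⟩, ?_⟩⟩,
      ?_, ?_⟩
    · exact (Fintype.sum_equiv (Equiv.subRight p.1) _ p.2.1 (fun i => rfl)).trans p.2.2.1.1
    · exact (Fintype.sum_equiv (Equiv.addRight (existsUnique_goodAt n f.1 f.2.1).choose) _ f.1
        (fun i => rfl)).trans f.2.1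
    · intro i h1 hi
      exact (existsUnique_goodAt n f.1 f.2.1).choose_spec.1 i h1 hi
    · rintro ⟨r, w, hw⟩
      have hg : GoodAt n (fun i => w (i - r)) r := by
        intro i h1 hi
        simpa using hw.2 i h1 hi
      have hre := ((existsUnique_goodAt n (fun i => w (i - r)) (by
        exact (Fintype.sum_equiv (Equiv.subRight r) _ w (fun i => rfl)).trans hw.1.1)).choose_spec.2 r hg).symm
      simp only [Prod.mk.injEq]
      constructor
      · exact hre
      · apply Subtype.ext
        funext i
        simp only []
        rw [hre, add_sub_cancel_right]
    · rintro ⟨f, hf⟩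
      apply Subtype.ext
      funext i
      simp only []
      rw [sub_add_cancel]
  rw [Nat.card_congr E.symm, Nat.card_prod, Nat.card_eq_fintype_card, Fintype.card_fin]

open Finset in
noncomputable def treeDeg_equiv (n k : ℕ) :
    {d : ℕ → ℕ // IsTreeDeg n d ∧ ∀ i, i ≤ n → d i ≤ k}
      ≃ {w : Fin (n + 1) → ℕ // (∑ i, w i = n ∧ ∀ i, w i ≤ k) ∧
          ∀ i : ℕ, 1 ≤ i → i ≤ n → i ≤ ∑ j ∈ Finset.range i, w (j : Fin (n + 1))} := by
  refine ⟨fun d => ⟨fun i => d.1 i.val, ⟨?_, fun i => d.2.2 i.val (by omega)⟩, ?_⟩,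
    fun w => ⟨fun i => if h : i < n + 1 then w.1 ⟨i, h⟩ else 0, ⟨?_, ?_, ?_⟩, ?_⟩, ?_, ?_⟩
  · exact (Fin.sum_univ_eq_sum_range (fun i => d.1 i) (n + 1)).trans d.2.1.2.1
  · intro i h1 hi
    have : ∑ j ∈ Finset.range i, d.1 ((j : Fin (n + 1)) : ℕ) = ∑ j ∈ Finset.range i, d.1 j := by
      refine Finset.sum_congr rfl fun j hj => ?_
      rw [Fin.val_cast_of_lt (by have := Finset.mem_range.1 hj; omega)]
    rw [this]
    exact d.2.1.2.2 i h1 hi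
  · intro i hi
    exact dif_neg (by omega)
  · rw [← Fin.sum_univ_eq_sum_range]
    calc ∑ i : Fin (n + 1), (if h : (i : ℕ) < n + 1 then w.1 ⟨i, h⟩ else 0)
        = ∑ i : Fin (n + 1), w.1 i := by
          refine Finset.sum_congr rfl fun i _ => ?_
          rw [dif_pos i.isLt, Fin.eta]
      _ = n := w.2.1.1
  · intro i h1 hi
    have : ∑ j ∈ Finset.range i, (if h : j < n + 1 then w.1 ⟨j, h⟩ else 0)
        = ∑ j ∈ Finset.range i, w.1 (j : Fin (n + 1)) := by
      refine Finset.sum_congr rfl fun j hj => ?_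
      have hj' : j < n + 1 := by have := Finset.mem_range.1 hj; omega
      rw [dif_pos hj']
      exact congrArg w.1 (by apply Fin.ext; simp [Fin.val_cast_of_lt hj'])
    rw [this]
    exact w.2.2 i h1 hi
  · intro i hi
    have hi' : i < n + 1 := by omega
    show (if h : i < n + 1 then w.1 ⟨i, h⟩ else 0) ≤ k
    rw [dif_pos hi']
    exact w.2.1.2 _
  · rintro ⟨d, hd⟩
    apply Subtype.ext
    funext i
    simp only []
    split_ifs with h
    · rfl
    · exact (hd.1.1 i (by omega)).symm
  · rintro ⟨w, hw⟩
    apply Subtype.ext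
    funext i
    simp only [dif_pos i.isLt, Fin.eta]


/-- Closed formula for the generalized Motzkin number `M_{k,n}` (times `n+1`):
the number of plane trees with `n+1` nodes all of whose nodes have degree `≤ k`. -/
theorem generalized_motzkin_formula (n k : ℕ) (hk : 1 ≤ k) :
    ((n : ℤ) + 1) * Nat.card {d : ℕ → ℕ // IsTreeDeg n d ∧ ∀ i, i ≤ n → d i ≤ k} =
      ∑ j ∈ Finset.range (n / (k + 1) + 1),
        (-1) ^ j * ((n + 1).choose j : ℤ) * ((2 * n - j * (k + 1)).choose n : ℤ) := by
  classical
  have hsub : Finset.range (n / (k + 1) + 1) ⊆ Finset.range (n + 2) :=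
    Finset.range_subset_range.2 (by have := Nat.div_le_self n (k + 1); omega)
  have hpos : ∀ j ∈ Finset.range (n / (k + 1) + 1), j * (k + 1) ≤ n := by
    intro j hj
    have hj' : j ≤ n / (k + 1) := by have := Finset.mem_range.1 hj; omega
    exact (Nat.le_div_iff_mul_le (by omega)).1 hj'
  have hz : ∀ j ∈ Finset.range (n + 2), j ∉ Finset.range (n / (k + 1) + 1) →
      (-1 : ℤ) ^ j * ((n + 1).choose j : ℤ) *
        (if j * (k + 1) ≤ n then ((2 * n - j * (k + 1)).choose n : ℤ) else 0) = 0 := by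
    intro j hj hj'
    have hj2 : n / (k + 1) < j := by
      simp only [Finset.mem_range] at hj'
      omega
    rw [if_neg, mul_zero]
    have := (Nat.div_lt_iff_lt_mul (show 0 < k + 1 by omega)).1 hj2
    omega
  rw [Nat.card_congr (treeDeg_equiv n k)]
  have h1 : ((n : ℤ) + 1) * Nat.card {w : Fin (n + 1) → ℕ //
      (∑ i, w i = n ∧ ∀ i, w i ≤ k) ∧
      ∀ i : ℕ, 1 ≤ i → i ≤ n → i ≤ ∑ j ∈ Finset.range i, w (j : Fin (n + 1))}
      = (Nat.card {f : Fin (n + 1) → ℕ // ∑ i, f i = n ∧ ∀ i, f i ≤ k} : ℤ) := by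
    rw [cycle_count n k]
    push_cast
    ring
  rw [h1, card_bounded_formula n k]
  rw [← Finset.sum_subset hsub hz]
  exact Finset.sum_congr rfl fun j hj => by rw [if_pos (hpos j hj)]
end

section
/- For n ≥ 1, given nonnegative integers ℓ, m_0, m_1, m_2, ... with m_0 + m_1 + m_2 + ⋯ = n, the number of plane trees with a root of degree ℓ and exactly m_i non-root nodes of degree i for each i ≥ 0 equals (ℓ/n)·n!/(m_0!·m_1!·m_2!⋯) if m_1 + 2m_2 + 3m_3 + ⋯ = n - ℓ, and equals 0 otherwise. -/
open Finset
open scoped Nat Fin.NatCast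

namespace KW

variable (c : ℕ → ℕ)

/-- The walk. -/
noncomputable def S (t : ℕ) : ℤ := (∑ j ∈ Finset.range t, (c j : ℤ)) - t

lemma S_zero : S c 0 = 0 := by simp [S]

lemma S_succ (t : ℕ) : S c (t + 1) = S c t + c t - 1 := by
  simp [S, Finset.sum_range_succ]; ring

lemma S_step (t : ℕ) : S c t - 1 ≤ S c (t + 1) := by
  rw [S_succ]; have : (0:ℤ) ≤ c t := Int.ofNat_nonneg _; linarith

lemma S_add (r k : ℕ) : S c (r + k) = S c r + (∑ j ∈ Finset.range k, (c (r + j) : ℤ)) - k := by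
  have h : ∑ j ∈ Finset.range (r + k), (c j : ℤ)
      = ∑ j ∈ Finset.range r, (c j : ℤ) + ∑ j ∈ Finset.range k, (c (r + j) : ℤ) := by
    have e : ∑ j ∈ Finset.Ico r (r+k), (c j : ℤ) = ∑ j ∈ Finset.range k, (c (r + j) : ℤ) := by
      rw [Finset.sum_Ico_eq_sum_range]
      simp
    rw [← e, Finset.range_eq_Ico, Finset.range_eq_Ico]
    exact (Finset.sum_Ico_consecutive (fun j => (c j : ℤ)) (Nat.zero_le r) (Nat.le_add_right r k)).symm
  simp only [S, h]
  push_cast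
  ring

section Periodic

variable {n ℓ : ℕ} (hn : 1 ≤ n) (hper : ∀ t, c (t + n) = c t)
  (hsum : (∑ t ∈ Finset.range n, c t) + ℓ = n)

include hper in
lemma sum_shift (t : ℕ) : ∑ j ∈ Finset.range n, c (j + t) = ∑ j ∈ Finset.range n, c j := by
  induction t with
  | zero => simp
  | succ t ih =>
    have h1 : ∑ j ∈ Finset.range (n+1), c (j + t)
        = ∑ j ∈ Finset.range n, c (j + t) + c (n + t) := by
      rw [Finset.sum_range_succ]
    have h2 : ∑ j ∈ Finset.range (n+1), c (j + t)
        = ∑ j ∈ Finset.range n, c (j + 1 + t) + c (0 + t) := by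
      rw [Finset.sum_range_succ']
    have h3 : c (n + t) = c (0 + t) := by
      rw [Nat.zero_add, Nat.add_comm n t]; exact hper t
    have h4 : ∑ j ∈ Finset.range n, c (j + (t+1)) = ∑ j ∈ Finset.range n, c (j + t) := by
      have := h1.symm.trans h2
      rw [h3] at this
      have := Nat.add_right_cancel this
      simpa [Nat.add_assoc, Nat.add_comm 1 t] using this.symm
    rw [h4, ih]

include hper hsum in
lemma S_add_n (t : ℕ) : S c (t + n) = S c t - ℓ := by
  rw [S_add]
  have h : ∑ j ∈ Finset.range n, (c (t + j) : ℤ) = (n : ℤ) - ℓ := by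
    have h1 : ∑ j ∈ Finset.range n, c (t + j) = ∑ j ∈ Finset.range n, c j := by
      simpa [Nat.add_comm] using sum_shift c hper t
    have : ((∑ j ∈ Finset.range n, c (t + j) : ℕ) : ℤ) + ℓ = n := by
      rw [h1]; exact_mod_cast congrArg (Nat.cast : ℕ → ℤ) hsum
    push_cast at this ⊢
    linarith
  rw [h]; ring

/-- intermediate value for skip-free descending walks -/
lemma exists_S_eq {a b : ℕ} (hab : a ≤ b) {u : ℤ} (h1 : u ≤ S c a) (h2 : S c b ≤ u) :
    ∃ s, a ≤ s ∧ s ≤ b ∧ S c s = u := by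
  induction b, hab using Nat.le_induction with
  | base => exact ⟨a, le_refl a, le_refl a, le_antisymm h2 h1⟩
  | succ b hab ih =>
    by_cases h : S c b ≤ u
    · obtain ⟨s, h1, h2, h3⟩ := ih h
      exact ⟨s, h1, h2.trans (Nat.le_succ b), h3⟩
    · push_neg at h
      have := S_step c b
      refine ⟨b + 1, hab.trans (Nat.le_succ b), le_refl _, le_antisymm h2 ?_⟩
      omega

end Periodic


/-- the cyclic dominance condition -/
def Good (n ℓ : ℕ) (c : ℕ → ℕ) (r : ℕ) : Prop :=
  ∀ k, k < n → k + 1 ≤ ℓ + ∑ j ∈ Finset.range k, c (r + j)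

instance (n ℓ : ℕ) (c : ℕ → ℕ) : DecidablePred (Good n ℓ c) :=
  fun _ => Nat.decidableBallLT n _

section Main

variable {n ℓ : ℕ} {c : ℕ → ℕ} (hn : 1 ≤ n) (hper : ∀ t, c (t + n) = c t)
  (hsum : (∑ t ∈ Finset.range n, c t) + ℓ = n)

lemma good_iff (r : ℕ) : Good n ℓ c r ↔ ∀ k, k < n → S c r - ℓ < S c (r + k) := by
  unfold Good
  refine forall_congr' fun k => imp_congr_right fun _ => ?_
  rw [S_add c r k]
  have hcast : ((∑ j ∈ Finset.range k, c (r + j) : ℕ) : ℤ)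
      = ∑ j ∈ Finset.range k, (c (r + j) : ℤ) := by push_cast; rfl
  constructor
  · intro h
    have : ((k:ℤ)) + 1 ≤ (ℓ:ℤ) + ∑ j ∈ Finset.range k, (c (r + j) : ℤ) := by
      rw [← hcast]; exact_mod_cast h
    linarith
  · intro h
    have : ((k:ℤ)) + 1 ≤ (ℓ:ℤ) + ((∑ j ∈ Finset.range k, c (r + j) : ℕ) : ℤ) := by
      rw [hcast]; linarith
    exact_mod_cast this

include hper hsum in
lemma good_strictmin {r : ℕ} (hr : r < n)
    (hg : ∀ k, k < n → S c r - ℓ < S c (r + k)) :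
    ∀ s, s < r + n → S c (r + n) < S c s := by
  intro s hs
  rw [S_add_n c hper hsum r]
  rcases le_or_gt r s with h | h
  · have hk : s - r < n := by omega
    have := hg (s - r) hk
    rwa [Nat.add_sub_cancel' h] at this
  · have hk : s + n - r < n := by omega
    have h2 := hg (s + n - r) hk
    have hrk : r + (s + n - r) = s + n := by omega
    rw [hrk, S_add_n c hper hsum s] at h2
    have : (0:ℤ) ≤ ℓ := Int.ofNat_nonneg _
    linarith

include hper hsum in
lemma strictmin_good {r : ℕ} (hs : ∀ s, s < r + n → S c (r + n) < S c s) :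
    ∀ k, k < n → S c r - ℓ < S c (r + k) := by
  intro k hk
  have := hs (r + k) (by omega)
  rwa [S_add_n c hper hsum r] at this

include hn hper hsum in
lemma cycle_lemma : ((Finset.range n).filter (Good n ℓ c)).card = ℓ := by
  classical
  set M : ℤ := (Finset.range n).inf' (by simp; omega) (S c) with hM
  have M_le : ∀ t, t < n → M ≤ S c t := fun t ht =>
    Finset.inf'_le _ (Finset.mem_range.mpr ht)
  obtain ⟨t₀, ht₀, hSt₀⟩ := Finset.exists_mem_eq_inf' (s := Finset.range n)
      (by simp; omega) (S c)
  rw [Finset.mem_range] at ht₀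
  rw [← hM] at hSt₀
  have M_nonpos : M ≤ 0 := by
    have := M_le 0 hn
    rwa [S_zero] at this
  have card_Icc : (Finset.Icc (M - ℓ) (M - 1)).card = ℓ := by
    rw [Int.card_Icc]
    omega
  refine Eq.trans ?_ card_Icc
  apply Finset.card_bij (fun r _ => S c (r + n))
  · -- maps to
    intro r hr
    rw [Finset.mem_filter, Finset.mem_range] at hr
    obtain ⟨hrn, hg⟩ := hr
    have hg' := (good_iff r).mp hg
    have hmin := good_strictmin hper hsum hrn hg'
    rw [Finset.mem_Icc]
    constructor
    · rw [S_add_n c hper hsum r]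
      have := M_le r hrn
      linarith
    · have := hmin t₀ (by omega)
      rw [← hSt₀] at this
      omega
  · -- injective
    intro r hr r' hr' heq
    rw [Finset.mem_filter, Finset.mem_range] at hr hr'
    by_contra hne
    rcases Nat.lt_or_ge r r' with h | h
    · have hmin := good_strictmin hper hsum hr'.1 ((good_iff r').mp hr'.2)
      have := hmin (r + n) (by omega)
      omega
    · have h' : r' < r := by omega
      have hmin := good_strictmin hper hsum hr.1 ((good_iff r).mp hr.2)
      have := hmin (r' + n) (by omega)
      omega
  · -- surjective
    intro u hu
    rw [Finset.mem_Icc] at hu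
    have hex : ∃ s, S c s = u := by
      have h2 : S c (t₀ + n) = M - ℓ := by
        rw [S_add_n c hper hsum t₀, ← hSt₀]
      obtain ⟨s, _, _, hs⟩ := exists_S_eq c (Nat.zero_le (t₀ + n)) (u := u)
        (by rw [S_zero]; omega) (by rw [h2]; omega)
      exact ⟨s, hs⟩
    set s₀ := Nat.find hex with hs₀
    have hSs₀ : S c s₀ = u := Nat.find_spec hex
    have hlt2n : s₀ < 2 * n := by
      have h2 : S c (t₀ + n) = M - ℓ := by rw [S_add_n c hper hsum t₀, ← hSt₀]
      obtain ⟨s, _, hsle, hs⟩ := exists_S_eq c (Nat.zero_le (t₀ + n)) (u := u)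
        (by rw [S_zero]; omega) (by rw [h2]; omega)
      have := Nat.find_min' hex hs
      omega
    have hge : n ≤ s₀ := by
      by_contra h
      push_neg at h
      have := M_le s₀ h
      omega
    have hmin : ∀ s', s' < s₀ → S c s₀ < S c s' := by
      intro s' hs'
      by_contra hcon
      push_neg at hcon
      obtain ⟨s'', _, hsle'', hs''⟩ := exists_S_eq c (Nat.zero_le s') (u := u)
        (by rw [S_zero]; omega) (by omega)
      have := Nat.find_min' hex hs''
      omega
    refine ⟨s₀ - n, ?_, ?_⟩
    · rw [Finset.mem_filter, Finset.mem_range]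
      have hrn : s₀ - n + n = s₀ := by omega
      refine ⟨by omega, (good_iff _).mpr (strictmin_good hper hsum ?_)⟩
      rw [hrn]
      exact hmin
    · rw [Nat.sub_add_cancel hge]
      exact hSs₀

end Main



lemma card_filter_get {α : Type*} [DecidableEq α] (l : List α) (a : α) :
    ((Finset.univ : Finset (Fin l.length)).filter (fun j => l.get j = a)).card
      = l.count a := by
  induction l with
  | nil => simp
  | cons b t ih =>
    simp only [List.get_eq_getElem] at ih
    rw [Finset.card_filter]
    simp only [List.length_cons]
    rw [Fin.sum_univ_succ]
    simp only [List.get_eq_getElem, Fin.val_zero, List.getElem_cons_zero, Fin.val_succ,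
      List.getElem_cons_succ]
    rw [← Finset.card_filter, ih, List.count_cons]
    by_cases hb : b = a <;> simp [hb, Nat.add_comm]

lemma list_sum_range {β : Type*} [AddCommMonoid β] (g : ℕ → β) (N : ℕ) :
    ((List.range N).map g).sum = ∑ i ∈ Finset.range N, g i := by
  induction N with
  | zero => simp
  | succ N ih => rw [List.range_succ, Finset.sum_range_succ, List.map_append, List.sum_append, ih]; simp

section W0

variable (n : ℕ) (m : ℕ → ℕ)

/-- canonical list with `m i` copies of `i` -/
def L : List ℕ := (List.range (n+1)).flatMap fun i => List.replicate (m i) i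

lemma count_L (i : ℕ) : (L n m).count i = if i < n + 1 then m i else 0 := by
  rw [L, List.count_flatMap]
  have : (List.map (List.count i ∘ fun i' => List.replicate (m i') i') (List.range (n+1)))
      = (List.range (n+1)).map (fun i' => if i' = i then m i' else 0) := by
    apply List.map_congr_left
    intro i' _
    simp [List.count_replicate]
  rw [this, list_sum_range, Finset.sum_ite_eq' (Finset.range (n+1)) i m]
  simp [Finset.mem_range]

lemma length_L (hm : ∑ i ∈ Finset.range (n+1), m i = n) : (L n m).length = n := by
  rw [L, List.length_flatMap]
  have : (List.map (fun a => (List.replicate (m a) a).length) (List.range (n+1)))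
      = (List.range (n+1)).map m := by
    apply List.map_congr_left; intro i' _; simp
  rw [this, list_sum_range, hm]

lemma get_L_lt (j : Fin (L n m).length) : (L n m).get j < n + 1 := by
  have hmem : (L n m).get j ∈ L n m := (L n m).get_mem j
  unfold L at hmem
  rw [List.mem_flatMap] at hmem
  obtain ⟨i, hi, hmem⟩ := hmem
  rw [List.mem_range] at hi
  have heq : (L n m).get j = i := List.eq_of_mem_replicate hmem
  rw [heq]
  exact hi

variable (hm : ∑ i ∈ Finset.range (n+1), m i = n)

/-- canonical word with letter counts `m` -/
def w₀ : Fin n → Fin (n+1) := fun j =>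
  ⟨(L n m).get (Fin.cast (length_L n m hm).symm j), get_L_lt n m _⟩

lemma fiber_w₀ (i : Fin (n+1)) :
    ((Finset.univ : Finset (Fin n)).filter (fun j => w₀ n m hm j = i)).card = m i := by
  have h1 := card_filter_get (L n m) (i : ℕ)
  have h2 : ((Finset.univ : Finset (Fin n)).filter (fun j => w₀ n m hm j = i)).card
      = ((Finset.univ : Finset (Fin (L n m).length)).filter
          (fun j => (L n m).get j = (i : ℕ))).card := by
    apply Finset.card_bij (fun j _ => Fin.cast (length_L n m hm).symm j)
    · intro j hj
      rw [Finset.mem_filter] at hj ⊢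
      refine ⟨Finset.mem_univ _, ?_⟩
      have := hj.2
      rw [w₀, Fin.ext_iff] at this
      exact this
    · intro j _ j' _ h
      have := congrArg Fin.val h
      simp only [Fin.coe_cast] at this
      exact Fin.ext this
    · intro j' hj'
      rw [Finset.mem_filter] at hj'
      refine ⟨Fin.cast (length_L n m hm) j', Finset.mem_filter.mpr ⟨Finset.mem_univ _, ?_⟩, rfl⟩
      rw [w₀, Fin.ext_iff]
      exact hj'.2
  rw [h2, h1, count_L, if_pos i.isLt]

end W0

lemma exists_comp_perm {N : ℕ} {ι : Type*} [Fintype ι] [DecidableEq ι] (w w' : Fin N → ι)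
    (h : ∀ i, (Finset.univ.filter fun j => w j = i).card
        = (Finset.univ.filter fun j => w' j = i).card) :
    ∃ σ : Equiv.Perm (Fin N), w = w' ∘ σ := by
  have e : ∀ i, {a // w a = i} ≃ {b // w' b = i} := fun i =>
    Fintype.equivOfCardEq (by rw [Fintype.card_subtype, Fintype.card_subtype]; exact h i)
  exact ⟨Equiv.ofFiberEquiv e, funext fun a => (Equiv.ofFiberEquiv_map e a).symm⟩

lemma card_filter_comp_perm {N : ℕ} {ι : Type*} [DecidableEq ι] (w : Fin N → ι)
    (σ : Equiv.Perm (Fin N)) (i : ι) :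
    (Finset.univ.filter fun j => w (σ j) = i).card
      = (Finset.univ.filter fun j => w j = i).card := by
  apply Finset.card_bij (fun j _ => σ j)
  · intro j hj
    rw [Finset.mem_filter] at hj ⊢
    exact ⟨Finset.mem_univ _, hj.2⟩
  · intro j _ j' _ h
    exact σ.injective h
  · intro j' hj'
    rw [Finset.mem_filter] at hj'
    exact ⟨σ.symm j', Finset.mem_filter.mpr ⟨Finset.mem_univ _, by simp [hj'.2]⟩, by simp⟩

lemma card_words (n : ℕ) (m : ℕ → ℕ) (hm : ∑ i ∈ Finset.range (n+1), m i = n) :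
    (Finset.univ.filter (fun w : Fin n → Fin (n+1) =>
        ∀ i : Fin (n+1), (Finset.univ.filter fun j => w j = i).card = m (i:ℕ))).card
      = Nat.multinomial (Finset.range (n+1)) m := by
  classical
  set W := (Finset.univ.filter (fun w : Fin n → Fin (n+1) =>
      ∀ i : Fin (n+1), (Finset.univ.filter fun j => w j = i).card = m (i:ℕ))) with hW
  have hP : (0:ℕ) < ∏ i ∈ Finset.range (n+1), (m i)! :=
    Finset.prod_pos fun i _ => Nat.factorial_pos _
  have key : (Fintype.card (Equiv.Perm (Fin n)))
      = W.card * ∏ i ∈ Finset.range (n+1), (m i)! := by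
    rw [← Finset.card_univ,
      Finset.card_eq_sum_card_fiberwise (f := fun σ : Equiv.Perm (Fin n) => w₀ n m hm ∘ σ)
        (t := W) (fun σ _ => ?_)]
    · rw [Finset.sum_congr rfl (g := fun _ => ∏ i ∈ Finset.range (n+1), (m i)!)
        (fun w hw => ?_), Finset.sum_const, smul_eq_mul]
      -- fiber over w has cardinality ∏ (m i)!
      rw [hW, Finset.mem_filter] at hw
      obtain ⟨τ, hτ⟩ := exists_comp_perm w (w₀ n m hm)
        (fun i => by rw [hw.2 i, fiber_w₀ n m hm i])
      have hstab : (Finset.univ.filter fun g : Equiv.Perm (Fin n) =>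
          w₀ n m hm ∘ g = w₀ n m hm).card = ∏ i ∈ Finset.range (n+1), (m i)! := by
        rw [← Fintype.card_subtype, DomMulAct.stabilizer_card]
        rw [← Fin.prod_univ_eq_prod_range (fun i => (m i)!) (n+1)]
        apply Finset.prod_congr rfl
        intro i _
        rw [Fintype.card_subtype, fiber_w₀ n m hm i]
      rw [← hstab]
      apply Finset.card_bij (fun σ _ => σ * τ⁻¹)
      · intro σ hσ
        rw [Finset.mem_filter] at hσ ⊢
        refine ⟨Finset.mem_univ _, ?_⟩
        funext x
        have := congrFun hσ.2 (τ⁻¹ x)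
        simp only [Function.comp_apply, Equiv.Perm.mul_apply] at this ⊢
        rw [this, hτ]
        simp
      · intro σ _ σ' _ h
        exact mul_right_cancel h
      · intro g hg
        rw [Finset.mem_filter] at hg
        refine ⟨g * τ, Finset.mem_filter.mpr ⟨Finset.mem_univ _, ?_⟩, by group⟩
        funext x
        have := congrFun hg.2 (τ x)
        simp only [Function.comp_apply, Equiv.Perm.mul_apply] at this ⊢
        rw [this, hτ]
        rfl
    · -- w₀ ∘ σ ∈ W
      rw [Finset.mem_coe, hW, Finset.mem_filter]
      refine ⟨Finset.mem_univ _, fun i => ?_⟩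
      simp only [Function.comp_apply]
      rw [card_filter_comp_perm (w₀ n m hm) σ i, fiber_w₀ n m hm i]
  have spec := Nat.multinomial_spec (Finset.range (n+1)) m
  rw [hm] at spec
  rw [Fintype.card_perm, Fintype.card_fin] at key
  apply Nat.eq_of_mul_eq_mul_right hP
  rw [← key, mul_comm (Nat.multinomial _ _) _, spec]


section Bridge

variable (n : ℕ) [NeZero n]

/-- periodic extension of a word -/
def cw (w : Fin n → Fin (n+1)) (t : ℕ) : ℕ := (w (t : Fin n) : ℕ)

/-- rotation of a word -/
def rot (r : ℕ) (w : Fin n → Fin (n+1)) : Fin n → Fin (n+1) :=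
  fun j => w (j + ((r : ℕ) : Fin n))

lemma cw_per (w : Fin n → Fin (n+1)) (t : ℕ) : cw n w (t + n) = cw n w t := by
  unfold cw
  have : ((t + n : ℕ) : Fin n) = ((t : ℕ) : Fin n) := by
    push_cast
    rw [Fin.natCast_self, add_zero]
  rw [this]

lemma cw_rot (r : ℕ) (w : Fin n → Fin (n+1)) (t : ℕ) :
    cw n (rot n r w) t = cw n w (t + r) := by
  unfold cw rot
  have : ((t + r : ℕ) : Fin n) = ((t : ℕ) : Fin n) + ((r : ℕ) : Fin n) := by push_cast; rfl
  rw [this]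

lemma cw_small (w : Fin n → Fin (n+1)) {t : ℕ} (ht : t < n) :
    cw n w t = (w ⟨t, ht⟩ : ℕ) := by
  unfold cw
  congr 2
  apply Fin.ext
  simp [Fin.val_natCast, Nat.mod_eq_of_lt ht]

lemma sum_cw (w : Fin n → Fin (n+1)) :
    ∑ t ∈ Finset.range n, cw n w t = ∑ j : Fin n, (w j : ℕ) := by
  rw [← Fin.sum_univ_eq_sum_range (fun t => cw n w t) n]
  refine Finset.sum_congr rfl fun j _ => ?_
  unfold cw
  rw [Fin.cast_val_eq_self]

lemma rot_fiber (r : ℕ) (w : Fin n → Fin (n+1)) (i : Fin (n+1)) :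
    (Finset.univ.filter fun j => rot n r w j = i).card
      = (Finset.univ.filter fun j => w j = i).card :=
  card_filter_comp_perm w (Equiv.addRight ((r : ℕ) : Fin n)) i

lemma sub_fiber (r : ℕ) (v : Fin n → Fin (n+1)) (i : Fin (n+1)) :
    (Finset.univ.filter fun j => v (j - ((r : ℕ) : Fin n)) = i).card
      = (Finset.univ.filter fun j => v j = i).card :=
  card_filter_comp_perm v (Equiv.subRight ((r : ℕ) : Fin n)) i

lemma good_rot (ℓ r : ℕ) (w : Fin n → Fin (n+1)) :
    Good n ℓ (cw n (rot n r w)) 0 ↔ Good n ℓ (cw n w) r := by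
  unfold Good
  refine forall_congr' fun k => imp_congr_right fun _ => ?_
  have h : ∀ j, cw n (rot n r w) (0 + j) = cw n w (r + j) := fun j => by
    rw [cw_rot]
    congr 1
    omega
  rw [Finset.sum_congr rfl fun j _ => h j]

variable (ℓ : ℕ) (m : ℕ → ℕ)

lemma sum_w {w : Fin n → Fin (n+1)}
    (h : ∀ i : Fin (n+1), (Finset.univ.filter fun j => w j = i).card = m (i : ℕ)) :
    ∑ j : Fin n, (w j : ℕ) = ∑ i ∈ Finset.range (n+1), i * m i := by
  rw [← Finset.sum_fiberwise_of_maps_to (g := w) (t := (Finset.univ : Finset (Fin (n+1))))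
      (fun j _ => Finset.mem_univ _) (fun j => (w j : ℕ)),
    ← Fin.sum_univ_eq_sum_range (fun i => i * m i) (n+1)]
  refine Finset.sum_congr rfl fun i _ => ?_
  rw [Finset.sum_congr rfl (fun j hj => by
      rw [(Finset.mem_filter.mp hj).2] : ∀ j ∈ Finset.univ.filter fun j => w j = i,
        ((w j : ℕ)) = (i : ℕ)),
    Finset.sum_const, smul_eq_mul, h i, mul_comm]

/-- word associated to a degree sequence -/
def wd (d : ℕ → ℕ) : Fin n → Fin (n+1) := fun j => ⟨min (d (j.val + 1)) n, by omega⟩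

/-- degree sequence associated to a word -/
def dv (v : Fin n → Fin (n+1)) : ℕ → ℕ := fun i =>
  if h : 1 ≤ i ∧ i ≤ n then (v ⟨i - 1, by omega⟩ : ℕ) else if i = 0 then ℓ else 0

lemma dv_succ (v : Fin n → Fin (n+1)) {j : ℕ} (hj : j < n) :
    dv n ℓ v (j + 1) = (v ⟨j, hj⟩ : ℕ) := by
  unfold dv
  rw [dif_pos ⟨by omega, by omega⟩]
  congr 1

lemma dv_zero (v : Fin n → Fin (n+1)) : dv n ℓ v 0 = ℓ := by
  unfold dv
  rw [dif_neg (by omega), if_pos rfl]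

lemma wd_fiber (d : ℕ → ℕ) (hb : ∀ j, 1 ≤ j → j ≤ n → d j ≤ n) (i : Fin (n+1)) :
    (Finset.univ.filter fun j : Fin n => wd n d j = i).card
      = ((Finset.Icc 1 n).filter fun j => d j = (i : ℕ)).card := by
  apply Finset.card_bij' (fun j _ => j.val + 1)
    (fun a ha => (⟨a - 1, by
      rw [Finset.mem_filter, Finset.mem_Icc] at ha; omega⟩ : Fin n))
  case hi =>
    intro j hj
    rw [Finset.mem_filter] at hj
    rw [Finset.mem_filter, Finset.mem_Icc]
    have hj2 := hj.2
    rw [wd, Fin.ext_iff] at hj2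
    simp only at hj2
    rw [min_eq_left (hb (j.val+1) (by omega) (by omega))] at hj2
    exact ⟨⟨by omega, by omega⟩, hj2⟩
  case hj =>
    intro a ha
    rw [Finset.mem_filter, Finset.mem_Icc] at ha
    rw [Finset.mem_filter]
    refine ⟨Finset.mem_univ _, ?_⟩
    rw [wd, Fin.ext_iff]
    simp only
    have : a - 1 + 1 = a := by omega
    rw [this, min_eq_left (by omega)]
    exact ha.2
  case left_inv =>
    intro j hj
    apply Fin.ext
    simp
  case right_inv =>
    intro a ha
    rw [Finset.mem_filter, Finset.mem_Icc] at ha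
    simp
    omega

lemma dv_cnt (v : Fin n → Fin (n+1))
    (h1 : ∀ i : Fin (n+1), (Finset.univ.filter fun j => v j = i).card = m (i : ℕ))
    (hm' : ∀ i, n < i → m i = 0) :
    ∀ i, ((Finset.Icc 1 n).filter fun j => dv n ℓ v j = i).card = m i := by
  intro i
  rcases le_or_gt i n with hi | hi
  · have h2 := h1 ⟨i, by omega⟩
    rw [← h2]
    apply Finset.card_bij' (fun a ha => (⟨a - 1, by
        rw [Finset.mem_filter, Finset.mem_Icc] at ha; omega⟩ : Fin n))
      (fun j _ => j.val + 1)
    case hi =>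
      intro a ha
      rw [Finset.mem_filter, Finset.mem_Icc] at ha
      rw [Finset.mem_filter]
      refine ⟨Finset.mem_univ _, ?_⟩
      obtain ⟨⟨ha1, ha2⟩, ha3⟩ := ha
      have : dv n ℓ v ((a - 1) + 1) = (v ⟨a - 1, by omega⟩ : ℕ) := dv_succ n ℓ v (by omega)
      rw [show a - 1 + 1 = a by omega] at this
      rw [Fin.ext_iff]
      simp only
      rw [← this, ha3]
    case hj =>
      intro j hj
      rw [Finset.mem_filter] at hj
      rw [Finset.mem_filter, Finset.mem_Icc]
      refine ⟨⟨by omega, by omega⟩, ?_⟩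
      rw [dv_succ n ℓ v j.isLt]
      have := hj.2
      rw [Fin.ext_iff] at this
      simpa using this
    case left_inv =>
      intro a ha
      rw [Finset.mem_filter, Finset.mem_Icc] at ha
      simp
      omega
    case right_inv =>
      intro j hj
      apply Fin.ext
      simp
  · rw [hm' i hi, Finset.card_eq_zero, Finset.filter_eq_empty_iff]
    intro j hj
    rw [Finset.mem_Icc] at hj
    have : dv n ℓ v j = (v ⟨j - 1, by omega⟩ : ℕ) := by
      have := dv_succ n ℓ v (j := j - 1) (by omega)
      rw [show j - 1 + 1 = j by omega] at this
      exact this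
    rw [this]
    have := (v ⟨j - 1, by omega⟩).isLt
    omega

lemma wd_good (d : ℕ → ℕ) (hb : ∀ j, 1 ≤ j → j ≤ n → d j ≤ n) (h0 : d 0 = ℓ)
    (hdom : ∀ i, 1 ≤ i → i ≤ n → i ≤ ∑ j ∈ Finset.range i, d j) :
    Good n ℓ (cw n (wd n d)) 0 := by
  intro k hk
  have hsum : ∑ j ∈ Finset.range k, cw n (wd n d) (0 + j) = ∑ j ∈ Finset.range k, d (j+1) := by
    refine Finset.sum_congr rfl fun j hj => ?_
    have hjn : j < n := lt_of_lt_of_le (Finset.mem_range.mp hj) hk.le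
    rw [zero_add, cw_small n _ hjn]
    show min (d (j + 1)) n = d (j + 1)
    exact min_eq_left (hb (j+1) (by omega) (by omega))
  rw [hsum]
  have h2 := hdom (k+1) (by omega) (by omega)
  rw [Finset.sum_range_succ', h0] at h2
  omega

lemma dv_tree (v : Fin n → Fin (n+1))
    (h1 : ∀ i : Fin (n+1), (Finset.univ.filter fun j => v j = i).card = m (i : ℕ))
    (h2 : Good n ℓ (cw n v) 0)
    (hc : (∑ i ∈ Finset.range (n+1), i * m i) + ℓ = n) :
    IsTreeDeg n (dv n ℓ v) := by
  have hsucc : ∀ j ∈ Finset.range n, dv n ℓ v (j + 1) = cw n v j := fun j hj => by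
    rw [dv_succ n ℓ v (Finset.mem_range.mp hj), cw_small n v (Finset.mem_range.mp hj)]
  refine ⟨?_, ?_, ?_⟩
  · intro i hi
    unfold dv
    rw [dif_neg (by omega), if_neg (by omega)]
  · rw [Finset.sum_range_succ', dv_zero,
      Finset.sum_congr rfl hsucc, sum_cw, sum_w n m h1, hc]
  · intro i h1i hin
    have hk : i - 1 < n := by omega
    have h3 := h2 (i - 1) hk
    have e : ∑ j ∈ Finset.range i, dv n ℓ v j
        = ∑ j ∈ Finset.range (i-1), cw n v j + ℓ := by
      rw [show i = (i - 1) + 1 by omega, Finset.sum_range_succ', dv_zero]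
      congr 1
      refine Finset.sum_congr rfl fun j hj => ?_
      exact hsucc j (Finset.mem_range.mpr (lt_of_lt_of_le (Finset.mem_range.mp hj) hk.le))
    rw [e]
    have e2 : ∑ j ∈ Finset.range (i-1), cw n v (0 + j)
        = ∑ j ∈ Finset.range (i-1), cw n v j := by
      refine Finset.sum_congr rfl fun j _ => ?_
      rw [zero_add]
    rw [e2] at h3
    omega

lemma dv_wd (d : ℕ → ℕ) (hb : ∀ j, 1 ≤ j → j ≤ n → d j ≤ n) (h0 : d 0 = ℓ)
    (hvan : ∀ i, n < i → d i = 0) : dv n ℓ (wd n d) = d := by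
  funext i
  unfold dv
  by_cases h : 1 ≤ i ∧ i ≤ n
  · rw [dif_pos h]
    show min (d ((i - 1) + 1)) n = d i
    rw [show i - 1 + 1 = i by omega]
    exact min_eq_left (hb i h.1 h.2)
  · rw [dif_neg h]
    by_cases h0' : i = 0
    · rw [if_pos h0', h0', h0]
    · rw [if_neg h0', (hvan i (by omega)).symm]

lemma wd_dv (v : Fin n → Fin (n+1)) : wd n (dv n ℓ v) = v := by
  funext j
  apply Fin.ext
  show min (dv n ℓ v (j.val + 1)) n = (v j : ℕ)
  rw [dv_succ n ℓ v j.isLt]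
  have h := (v ⟨j.val, j.isLt⟩).isLt
  rw [min_eq_left (by omega)]

end Bridge

lemma tree_le {n : ℕ} {d : ℕ → ℕ} (hd : IsTreeDeg n d) : ∀ j, j ≤ n → d j ≤ n := by
  intro j hj
  have := hd.2.1
  calc d j ≤ ∑ i ∈ Finset.range (n+1), d i :=
        Finset.single_le_sum (fun i _ => Nat.zero_le _) (Finset.mem_range.mpr (by omega))
    _ = n := this

lemma sum_d {n : ℕ} (m : ℕ → ℕ) (d : ℕ → ℕ)
    (hd2 : ∑ i ∈ Finset.range (n+1), d i = n)
    (hcnt : ∀ i, ((Finset.Icc 1 n).filter fun j => d j = i).card = m i) :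
    (∑ i ∈ Finset.range (n+1), i * m i) + d 0 = n := by
  have hb : ∀ j ∈ Finset.Icc 1 n, d j ∈ Finset.range (n+1) := by
    intro j hj
    rw [Finset.mem_Icc] at hj
    rw [Finset.mem_range]
    have : d j ≤ n := by
      calc d j ≤ ∑ i ∈ Finset.range (n+1), d i :=
          Finset.single_le_sum (fun i _ => Nat.zero_le _) (Finset.mem_range.mpr (by omega))
        _ = n := hd2
    omega
  have h1 : ∑ j ∈ Finset.Icc 1 n, d j = ∑ i ∈ Finset.range (n+1), i * m i := by
    rw [← Finset.sum_fiberwise_of_maps_to hb (fun j => d j)]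
    refine Finset.sum_congr rfl fun i _ => ?_
    rw [Finset.sum_congr rfl (fun j hj => (Finset.mem_filter.mp hj).2 :
        ∀ j ∈ (Finset.Icc 1 n).filter fun j => d j = i, d j = i),
      Finset.sum_const, smul_eq_mul, hcnt i, mul_comm]
  have h2 : ∑ j ∈ Finset.range n, d (j+1) = ∑ j ∈ Finset.Icc 1 n, d j := by
    rw [← Finset.Ico_add_one_right_eq_Icc, Finset.sum_Ico_eq_sum_range]
    refine Finset.sum_congr (by congr 1) fun j _ => by rw [Nat.add_comm]
  rw [Finset.sum_range_succ', h2, h1] at hd2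
  exact hd2

end KW

set_option maxHeartbeats 1000000 in
/-- Kreweras-type count: the number of plane trees with `n+1` nodes, root of degree `ℓ`,
and exactly `m i` non-root nodes of degree `i` for each `i`, is
`(ℓ/n)·n!/(m_0!·m_1!⋯)` if `m_1 + 2m_2 + ⋯ = n - ℓ`, and `0` otherwise. -/
theorem kreweras_count (n ℓ : ℕ) (m : ℕ → ℕ) (hn : 1 ≤ n)
    (hm : ∑ i ∈ Finset.range (n + 1), m i = n) (hm' : ∀ i, n < i → m i = 0) :
    n * Nat.card {d : ℕ → ℕ // IsTreeDeg n d ∧ d 0 = ℓ ∧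
        ∀ i, ((Finset.Icc 1 n).filter fun j => d j = i).card = m i} =
      if (∑ i ∈ Finset.range (n + 1), i * m i) + ℓ = n then
        ℓ * Nat.multinomial (Finset.range (n + 1)) m
      else 0 := by
  by_cases hc : (∑ i ∈ Finset.range (n + 1), i * m i) + ℓ = n
  · rw [if_pos hc]
    haveI : NeZero n := ⟨by omega⟩
    set W' := Finset.univ.filter (fun w : Fin n → Fin (n+1) =>
        ∀ i : Fin (n+1), (Finset.univ.filter fun j => w j = i).card = m (i:ℕ)) with hW'
    set D' := W'.filter (fun w => KW.Good n ℓ (KW.cw n w) 0) with hD'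
    set G := (W' ×ˢ Finset.range n).filter (fun p => KW.Good n ℓ (KW.cw n p.1) p.2) with hG
    have hWmem : ∀ w, w ∈ W' ↔ ∀ i : Fin (n+1),
        (Finset.univ.filter fun j => w j = i).card = m (i:ℕ) := fun w => by
      rw [hW', Finset.mem_filter]
      simp
    have hsum_w : ∀ w ∈ W', (∑ t ∈ Finset.range n, KW.cw n w t) + ℓ = n := by
      intro w hw
      rw [KW.sum_cw, KW.sum_w n m ((hWmem w).mp hw), hc]
    have hG1 : G.card = ℓ * W'.card := by
      rw [Finset.card_eq_sum_card_fiberwise (f := Prod.fst) (s := G) (t := W')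
        (fun p hp => by
          rw [Finset.mem_coe, hG, Finset.mem_filter, Finset.mem_product] at hp
          exact hp.1.1)]
      have hfibs : ∀ w ∈ W', (G.filter fun p => p.1 = w).card = ℓ := by
        intro w hw
        have hfib : (G.filter fun p => p.1 = w).card
            = ((Finset.range n).filter (KW.Good n ℓ (KW.cw n w))).card := by
          apply Finset.card_bij' (fun p _ => p.2) (fun r _ => (w, r))
          case hi =>
            intro p hp
            rw [Finset.mem_filter, hG, Finset.mem_filter, Finset.mem_product] at hp
            rw [Finset.mem_filter]
            obtain ⟨⟨⟨_, hr⟩, hgood⟩, heq⟩ := hp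
            rw [heq] at hgood
            exact ⟨hr, hgood⟩
          case hj =>
            intro r hr
            rw [Finset.mem_filter] at hr
            rw [Finset.mem_filter, hG, Finset.mem_filter, Finset.mem_product]
            exact ⟨⟨⟨hw, hr.1⟩, hr.2⟩, rfl⟩
          case left_inv =>
            intro p hp
            rw [Finset.mem_filter] at hp
            rw [← hp.2]
          case right_inv =>
            intro r _
            rfl
        rw [hfib]
        exact KW.cycle_lemma hn (KW.cw_per n w) (hsum_w w hw)
      rw [Finset.sum_congr rfl hfibs, Finset.sum_const, smul_eq_mul, mul_comm]
    have hG2 : G.card = n * D'.card := by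
      have hmaps : ∀ p ∈ G, KW.rot n p.2 p.1 ∈ D' := by
        intro p hp
        rw [hG, Finset.mem_filter, Finset.mem_product] at hp
        obtain ⟨⟨hw, hr⟩, hgood⟩ := hp
        rw [hD', Finset.mem_filter]
        constructor
        · rw [hWmem]
          intro i
          rw [KW.rot_fiber]
          exact (hWmem _).mp hw i
        · exact (KW.good_rot n ℓ p.2 p.1).mpr hgood
      rw [Finset.card_eq_sum_card_fiberwise hmaps]
      have hfibs : ∀ v ∈ D', (G.filter fun p => KW.rot n p.2 p.1 = v).card = n := by
        intro v hv
        rw [hD', Finset.mem_filter] at hv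
        obtain ⟨hvW, hvG⟩ := hv
        have hcard : (G.filter fun p => KW.rot n p.2 p.1 = v).card
            = (Finset.range n).card := by
          apply Finset.card_bij' (fun p _ => p.2)
            (fun r _ => ((fun j => v (j - ((r:ℕ) : Fin n))), r))
          case hi =>
            intro p hp
            rw [Finset.mem_filter, hG, Finset.mem_filter, Finset.mem_product] at hp
            exact hp.1.1.2
          case hj =>
            intro r hr
            have hrot : KW.rot n r (fun j => v (j - ((r:ℕ) : Fin n))) = v := by
              funext j
              show v (j + ((r:ℕ) : Fin n) - ((r:ℕ) : Fin n)) = v j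
              rw [add_sub_cancel_right]
            rw [Finset.mem_filter, hG, Finset.mem_filter, Finset.mem_product]
            refine ⟨⟨⟨?_, hr⟩, ?_⟩, hrot⟩
            · rw [hWmem]
              intro i
              rw [KW.sub_fiber]
              exact (hWmem v).mp hvW i
            · exact (KW.good_rot n ℓ r _).mp (by rw [hrot]; exact hvG)
          case left_inv =>
            rintro ⟨w1, r1⟩ hp
            rw [Finset.mem_filter] at hp
            have h1 : (fun j => v (j - ((r1:ℕ) : Fin n))) = w1 := by
              funext j
              rw [← hp.2]
              show w1 (j - ((r1:ℕ) : Fin n) + ((r1:ℕ) : Fin n)) = w1 j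
              rw [sub_add_cancel]
            simp only [h1]
          case right_inv =>
            intro r _
            rfl
        rw [hcard, Finset.card_range]
      rw [Finset.sum_congr rfl hfibs, Finset.sum_const, smul_eq_mul, mul_comm]
    have hT : Nat.card {d : ℕ → ℕ // IsTreeDeg n d ∧ d 0 = ℓ ∧
        ∀ i, ((Finset.Icc 1 n).filter fun j => d j = i).card = m i} = D'.card := by
      have e : {d : ℕ → ℕ // IsTreeDeg n d ∧ d 0 = ℓ ∧
          ∀ i, ((Finset.Icc 1 n).filter fun j => d j = i).card = m i} ≃ {v // v ∈ D'} := by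
        refine Equiv.mk (fun d => ⟨KW.wd n d.1, ?_⟩) (fun v => ⟨KW.dv n ℓ v.1, ?_⟩) ?_ ?_
        · obtain ⟨d, hd, h0, hcnt⟩ := d
          have hb : ∀ j, 1 ≤ j → j ≤ n → d j ≤ n := fun j _ h2 => KW.tree_le hd j h2
          rw [hD', Finset.mem_filter]
          constructor
          · rw [hWmem]
            intro i
            rw [KW.wd_fiber n d hb i]
            exact hcnt (i : ℕ)
          · exact KW.wd_good n ℓ d hb h0 hd.2.2
        · obtain ⟨v, hv⟩ := v
          rw [hD', Finset.mem_filter] at hv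
          obtain ⟨hvW, hvG⟩ := hv
          exact ⟨KW.dv_tree n ℓ m v ((hWmem v).mp hvW) hvG hc, KW.dv_zero n ℓ v,
            KW.dv_cnt n ℓ m v ((hWmem v).mp hvW) hm'⟩
        · rintro ⟨d, hd, h0, hcnt⟩
          apply Subtype.ext
          have hb : ∀ j, 1 ≤ j → j ≤ n → d j ≤ n := fun j _ h2 => KW.tree_le hd j h2
          exact KW.dv_wd n ℓ d hb h0 hd.1
        · rintro ⟨v, hv⟩
          apply Subtype.ext
          exact KW.wd_dv n ℓ v
      rw [Nat.card_congr e, Nat.card_eq_fintype_card, Fintype.card_coe]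
    rw [hT, ← hG2, hG1, hW']
    exact congrArg (ℓ * ·) (KW.card_words n m hm)
  · rw [if_neg hc]
    haveI : IsEmpty {d : ℕ → ℕ // IsTreeDeg n d ∧ d 0 = ℓ ∧
        ∀ i, ((Finset.Icc 1 n).filter fun j => d j = i).card = m i} := by
      refine ⟨fun d => ?_⟩
      obtain ⟨d, hd, h0, hcnt⟩ := d
      apply hc
      have := KW.sum_d m d hd.2.1 hcnt
      rw [h0] at this
      exact this
    rw [Nat.card_of_isEmpty, mul_zero]
end

section
/- Let L = U^{e_0} D U^{e_1} D ⋯ D U^{e_n} be a lattice path of length 2n (so e_0 + ⋯ + e_n = n) with e_0 = ℓ ≥ 1. Then exactly ℓ of the n cyclic reorderings L^{(r)} = U^{e_0} D U^{e_{r+1}} ⋯ D U^{e_n} D U^{e_1} ⋯ D U^{e_r}, for r in {0,1,...,n-1}, are Dyck paths. -/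
open scoped Classical
open Finset

private def Mx (A : ℕ → ℤ) (s : ℕ) : ℤ :=
  (Finset.range (s + 1)).sup' Finset.nonempty_range_add_one A

private lemma le_Mx (A : ℕ → ℤ) {m s : ℕ} (h : m ≤ s) : A m ≤ Mx A s :=
  Finset.le_sup' A (Finset.mem_range.2 (Nat.lt_succ_of_le h))

private lemma Mx_exists (A : ℕ → ℤ) (s : ℕ) : ∃ m ≤ s, Mx A s = A m := by
  obtain ⟨m, hm, h⟩ := Finset.exists_mem_eq_sup' (Finset.nonempty_range_add_one (n := s)) A
  exact ⟨m, Nat.lt_succ_iff.1 (Finset.mem_range.1 hm), h⟩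

private lemma Mx_succ (A : ℕ → ℤ) (s : ℕ) : Mx A (s + 1) = max (A (s + 1)) (Mx A s) := by
  apply le_antisymm
  · apply Finset.sup'_le
    intro m hm
    rw [Finset.mem_range] at hm
    rcases Nat.lt_succ_iff_lt_or_eq.1 hm with h | h
    · exact le_max_of_le_right (le_Mx A (by omega))
    · subst h; exact le_max_left _ _
  · apply max_le
    · exact le_Mx A (le_refl _)
    · obtain ⟨m, hm, hmx⟩ := Mx_exists A s
      rw [hmx]
      exact le_Mx A (by omega)

/-- Counting strict records of a walk with unit up-steps and period drift `ℓ`. -/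
private lemma rec_count (N ℓ : ℕ) (A : ℕ → ℤ)
    (hstep : ∀ m, A (m + 1) ≤ A m + 1)
    (hper : ∀ m, A (m + (N + 1)) = A m + ℓ) :
    ((Finset.Ico (N + 1) (2 * (N + 1))).filter (fun s => ∀ m < s, A m < A s)).card = ℓ := by
  have key : ∀ k, (((Finset.Ico (N + 1) (N + 1 + k)).filter
      (fun s => ∀ m < s, A m < A s)).card : ℤ) = Mx A (N + k) - Mx A N := by
    intro k
    induction k with
    | zero => simp
    | succ k ih =>
      have h1 : Finset.Ico (N + 1) (N + 1 + (k + 1))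
          = insert (N + 1 + k) (Finset.Ico (N + 1) (N + 1 + k)) := by
        rw [show N + 1 + (k + 1) = (N + 1 + k) + 1 from rfl, Finset.Ico_add_one_right_eq_Icc,
          Finset.Ico_insert_right (by omega)]
      have hnot : (N + 1 + k) ∉ Finset.Ico (N + 1) (N + 1 + k) := by simp
      have harg : N + 1 + k = (N + k) + 1 := by omega
      rw [h1, Finset.filter_insert]
      by_cases hR : ∀ m < N + 1 + k, A m < A (N + 1 + k)
      · rw [if_pos hR, Finset.card_insert_of_notMem
          (fun h => hnot (Finset.mem_of_mem_filter _ h))]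
        have hgt : Mx A (N + k) < A ((N + k) + 1) := by
          obtain ⟨m, hm, hmx⟩ := Mx_exists A (N + k)
          rw [hmx, ← harg]
          exact hR m (by omega)
        have hle : A ((N + k) + 1) ≤ Mx A (N + k) + 1 :=
          le_trans (hstep _) (by linarith [le_Mx A (le_refl (N + k))])
        have h2 : Mx A (N + (k + 1)) = Mx A (N + k) + 1 := by
          rw [show N + (k + 1) = (N + k) + 1 from rfl, Mx_succ,
            max_eq_left (le_of_lt hgt)]
          omega
        rw [h2]
        push_cast
        omega
      · rw [if_neg hR]
        push_neg at hR
        obtain ⟨m, hm, hAm⟩ := hR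
        have h2 : Mx A (N + (k + 1)) = Mx A (N + k) := by
          rw [show N + (k + 1) = (N + k) + 1 from rfl, Mx_succ, max_eq_right]
          calc A ((N + k) + 1) = A (N + 1 + k) := by rw [harg]
            _ ≤ A m := hAm
            _ ≤ Mx A (N + k) := le_Mx A (by omega)
        rw [h2, ih]
  have hMx : Mx A (N + (N + 1)) = Mx A N + ℓ := by
    apply le_antisymm
    · apply Finset.sup'_le
      intro m hm
      rw [Finset.mem_range] at hm
      by_cases h : m ≤ N
      · have := le_Mx A h
        have : (0 : ℤ) ≤ ℓ := Int.natCast_nonneg ℓ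
        linarith [le_Mx A h]
      · have h2 : m - (N + 1) ≤ N := by omega
        have h3 := le_Mx A h2
        have hm2 : m = (m - (N + 1)) + (N + 1) := by omega
        rw [hm2, hper]
        linarith
    · obtain ⟨m, hm, hmx⟩ := Mx_exists A N
      have h4 := le_Mx A (show m + (N + 1) ≤ N + (N + 1) by omega)
      rw [hper] at h4
      rw [hmx]
      exact h4
  have := key (N + 1)
  rw [hMx, show N + 1 + (N + 1) = 2 * (N + 1) by omega] at this
  omega

/-- Cycle lemma: if `L = U^{e_0} D U^{e_1} ⋯ D U^{e_n}` is a lattice path of length `2n`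
(so `e_0 + ⋯ + e_n = n`) with `e_0 = ℓ ≥ 1`, then exactly `ℓ` of the `n` cyclic
reorderings `L^{(r)} = U^{e_0} D U^{e_{r+1}} ⋯ D U^{e_n} D U^{e_1} ⋯ D U^{e_r}`,
`r ∈ {0,…,n-1}`, are Dyck paths (all partial sums dominate the index). -/
theorem cycle_lemma (n ℓ : ℕ) (e : ℕ → ℕ) (hℓ : 1 ≤ ℓ) (h0 : e 0 = ℓ)
    (hsum : ∑ i ∈ Finset.range (n + 1), e i = n) :
    ((Finset.range n).filter fun r =>
        ∀ i ∈ Finset.Icc 1 n, i ≤ ∑ j ∈ Finset.range i,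
          (if j = 0 then e 0 else if j + r ≤ n then e (j + r) else e (j + r - n))).card
      = ℓ := by
  have hn : 0 < n := by
    rcases Nat.eq_zero_or_pos n with h | h
    · subst h
      simp at hsum
      omega
    · exact h
  obtain ⟨N, rfl⟩ : ∃ N, n = N + 1 := ⟨n - 1, by omega⟩
  set ec : ℕ → ℕ := fun j => e ((j - 1) % (N + 1) + 1) with hec
  set A : ℕ → ℤ := fun m => ∑ j ∈ Finset.range m, (1 - (ec (j + 1) : ℤ)) with hA
  -- periodicity of ec
  have hecper : ∀ j, ec (j + 1 + (N + 1)) = ec (j + 1) := by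
    intro j
    simp only [hec]
    congr 2
    rw [show j + 1 + (N + 1) - 1 = j + (N + 1) from by omega, Nat.add_mod_right,
      show j + 1 - 1 = j from by omega]
  -- step bound
  have hA1 : ∀ m, A (m + 1) = A m + (1 - (ec (m + 1) : ℤ)) :=
    fun m => Finset.sum_range_succ _ m
  have hstep : ∀ m, A (m + 1) ≤ A m + 1 := by
    intro m
    rw [hA1 m]
    have : (0 : ℤ) ≤ (ec (m + 1) : ℤ) := Int.natCast_nonneg _
    linarith
  -- A as difference formula: A (r + t) = A r + t - ∑ ec over window
  have hAwin : ∀ r t : ℕ, A (r + t) = A r + ∑ j ∈ Finset.range t, (1 - (ec (r + j + 1) : ℤ)) := by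
    intro r t
    induction t with
    | zero => simp
    | succ t ih =>
      rw [show r + (t + 1) = (r + t) + 1 from rfl, hA1, ih, Finset.sum_range_succ]
      ring
  -- sum of e over 1..N+1
  have hS : (∑ j ∈ Finset.range (N + 1), e (j + 1)) + ℓ = N + 1 := by
    rw [← h0]
    rw [Finset.sum_range_succ'] at hsum
    omega
  have hScast : (∑ j ∈ Finset.range (N + 1), ((e (j + 1) : ℤ))) = (N + 1) - ℓ := by
    have h := congrArg (Nat.cast : ℕ → ℤ) hS
    push_cast at h
    linarith
  -- A (N+1) = ℓ
  have hAn : A (N + 1) = ℓ := by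
    simp only [hA]
    have h1 : ∀ j ∈ Finset.range (N + 1), (1 - (ec (j + 1) : ℤ)) = 1 - (e (j + 1) : ℤ) := by
      intro j hj
      rw [Finset.mem_range] at hj
      simp only [hec]
      rw [show j + 1 - 1 = j from by omega, Nat.mod_eq_of_lt hj]
    rw [Finset.sum_congr rfl h1, Finset.sum_sub_distrib, Finset.sum_const, Finset.card_range,
      nsmul_eq_mul, hScast]
    push_cast
    ring
  -- periodicity of A
  have hper : ∀ m, A (m + (N + 1)) = A m + ℓ := by
    intro m
    induction m with
    | zero =>
      have : A 0 = 0 := by simp [hA]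
      rw [Nat.zero_add, hAn, this, zero_add]
    | succ m ih =>
      have h1 : m + 1 + (N + 1) = (m + (N + 1)) + 1 := by omega
      rw [h1, hA1, hA1, show m + (N + 1) + 1 = m + 1 + (N + 1) from by omega, hecper m]
      linarith
  -- translate the Dyck condition
  have hpred : ∀ r < N + 1, ((∀ i ∈ Finset.Icc 1 (N + 1), i ≤ ∑ j ∈ Finset.range i,
        (if j = 0 then e 0 else if j + r ≤ N + 1 then e (j + r) else e (j + r - (N + 1))))
      ↔ (∀ m < r + (N + 1), A m < A (r + (N + 1)))) := by
    intro r hr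
    -- the partial sum formula
    have hsumf : ∀ t ≤ N, (∑ j ∈ Finset.range (t + 1),
        ((if j = 0 then e 0 else if j + r ≤ N + 1 then e (j + r) else e (j + r - (N + 1))) : ℤ))
        = ℓ + t - A (r + t) + A r := by
      intro t ht
      rw [Finset.sum_range_succ']
      have h2 : ∀ j ∈ Finset.range t,
          ((if j + 1 = 0 then (e 0 : ℤ) else if j + 1 + r ≤ N + 1 then (e (j + 1 + r) : ℤ)
            else (e (j + 1 + r - (N + 1)) : ℤ)))
          = (ec (r + j + 1) : ℤ) := by
        intro j hj
        rw [Finset.mem_range] at hj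
        rw [if_neg (Nat.succ_ne_zero j)]
        simp only [hec]
        by_cases hc : j + 1 + r ≤ N + 1
        · rw [if_pos hc]
          norm_cast
          congr 1
          rw [show r + j + 1 - 1 = j + r from by omega, Nat.mod_eq_of_lt (by omega)]
          omega
        · rw [if_neg hc]
          norm_cast
          congr 1
          rw [show r + j + 1 - 1 = j + r from by omega,
            Nat.mod_eq_sub_mod (by omega), Nat.mod_eq_of_lt (by omega)]
          omega
      rw [Finset.sum_congr rfl h2, if_pos rfl]
      have h3 := hAwin r t
      rw [Finset.sum_sub_distrib, Finset.sum_const, Finset.card_range] at h3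
      rw [h0]
      push_cast [nsmul_eq_mul] at h3
      linarith
    constructor
    · -- good rotation → record
      intro hQ m hm
      rw [hper r]
      by_cases hmr : r ≤ m
      · have ht : m - r ≤ N := by omega
        have hi := hQ ((m - r) + 1) (Finset.mem_Icc.2 ⟨by omega, by omega⟩)
        have hi' : (((m - r) + 1 : ℕ) : ℤ) ≤ ∑ j ∈ Finset.range ((m - r) + 1),
            ((if j = 0 then e 0 else if j + r ≤ N + 1 then e (j + r) else e (j + r - (N + 1))) : ℤ) := by
          exact_mod_cast hi
        rw [hsumf _ ht] at hi'
        rw [show m = r + (m - r) from by omega]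
        push_cast at hi'
        have hl1 : (1 : ℤ) ≤ (ℓ : ℤ) := by exact_mod_cast hℓ
        linarith
      · push_neg at hmr
        have ht : m + (N + 1) - r ≤ N := by omega
        have hi := hQ ((m + (N + 1) - r) + 1) (Finset.mem_Icc.2 ⟨by omega, by omega⟩)
        have hi' : (((m + (N + 1) - r) + 1 : ℕ) : ℤ) ≤ ∑ j ∈ Finset.range ((m + (N + 1) - r) + 1),
            ((if j = 0 then e 0 else if j + r ≤ N + 1 then e (j + r) else e (j + r - (N + 1))) : ℤ) := by
          exact_mod_cast hi
        rw [hsumf _ ht] at hi'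
        have h5 : A (r + (m + (N + 1) - r)) = A (m + (N + 1)) := by
          congr 1
          omega
        rw [h5, hper m] at hi'
        push_cast at hi'
        have hl1 : (1 : ℤ) ≤ (ℓ : ℤ) := by exact_mod_cast hℓ
        linarith
    · -- record → good rotation
      intro hR i hi
      rw [Finset.mem_Icc] at hi
      have ht : i - 1 ≤ N := by omega
      have hm : r + (i - 1) < r + (N + 1) := by omega
      have h6 := hR _ hm
      rw [hper r] at h6
      have : (i : ℤ) ≤ ∑ j ∈ Finset.range i,
          ((if j = 0 then e 0 else if j + r ≤ N + 1 then e (j + r) else e (j + r - (N + 1))) : ℤ) := by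
        rw [show i = (i - 1) + 1 from by omega, hsumf _ ht]
        push_cast
        have hl1 : (1 : ℤ) ≤ (ℓ : ℤ) := by exact_mod_cast hℓ
        omega
      exact_mod_cast this
  -- bijection with records in [N+1, 2(N+1))
  have hbij : ((Finset.range (N + 1)).filter fun r =>
        ∀ i ∈ Finset.Icc 1 (N + 1), i ≤ ∑ j ∈ Finset.range i,
          (if j = 0 then e 0 else if j + r ≤ N + 1 then e (j + r) else e (j + r - (N + 1)))).card
      = ((Finset.Ico (N + 1) (2 * (N + 1))).filter (fun s => ∀ m < s, A m < A s)).card := by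
    apply Finset.card_bij (fun r _ => r + (N + 1))
    · intro r hr
      simp only [Finset.mem_filter, Finset.mem_range] at hr
      simp only [Finset.mem_filter, Finset.mem_Ico]
      refine ⟨⟨by omega, by omega⟩, ?_⟩
      exact (hpred r hr.1).1 hr.2
    · intro a ha b hb h
      omega
    · intro s hs
      simp only [Finset.mem_filter, Finset.mem_Ico] at hs
      refine ⟨s - (N + 1), ?_, by omega⟩
      simp only [Finset.mem_filter, Finset.mem_range]
      refine ⟨by omega, ?_⟩
      apply (hpred (s - (N + 1)) (by omega)).2
      rw [show s - (N + 1) + (N + 1) = s from by omega]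
      exact hs.2
  rw [hbij]
  exact rec_count N ℓ A hstep hper
end

section
/- For n ≥ 1 and k ≥ 1, the number of sequences (d_0,...,d_n) of nonnegative integers with d_0+⋯+d_n = n, all partial sums d_0+⋯+d_{i-1} ≥ i for i in {1,...,n}, and d_i ≡ 0 (mod k) for all i in {1,...,n} (with d_0 ≡ n mod k), equals Σ_{0 ≤ j ≤ n/k} ((n-jk)/n)·C(n+j-1, j). -/
open Finset

private def minF (F : ℕ → ℤ) : ℕ → ℤ
  | 0 => F 0
  | T+1 => min (minF F T) (F (T+1))

private lemma minF_le (F : ℕ → ℤ) : ∀ {T s : ℕ}, s ≤ T → minF F T ≤ F s := by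
  intro T
  induction T with
  | zero => intro s hs; interval_cases s; exact le_refl _
  | succ T ih =>
      intro s hs
      rcases Nat.lt_succ_iff_lt_or_eq.mp (Nat.lt_succ_of_le hs) with h | rfl
      · exact le_trans (min_le_left _ _) (ih (by omega))
      · exact min_le_right _ _

private lemma exists_minF (F : ℕ → ℤ) : ∀ T : ℕ, ∃ s ≤ T, F s = minF F T := by
  intro T
  induction T with
  | zero => exact ⟨0, le_refl 0, rfl⟩
  | succ T ih =>
      obtain ⟨s, hs, hFs⟩ := ih
      rcases le_total (minF F T) (F (T+1)) with h | h
      · exact ⟨s, by omega, by rw [hFs, minF]; omega⟩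
      · exact ⟨T+1, le_refl _, by rw [minF]; omega⟩

private lemma minF_succ (F : ℕ → ℤ) (T : ℕ) :
    minF F (T+1) = min (minF F T) (F (T+1)) := rfl

private def recsCard (F : ℕ → ℤ) (T : ℕ) : ℕ :=
  ((Finset.range T).filter (fun t => ∀ s < t, F t < F s)).card

private lemma recsCard_eq (F : ℕ → ℤ) (hstep : ∀ t, F t - 1 ≤ F (t+1)) :
    ∀ T, (recsCard F (T+1) : ℤ) = 1 + F 0 - minF F T := by
  intro T
  induction T with
  | zero =>
      have h1 : (Finset.range 1).filter (fun t => ∀ s < t, F t < F s) = {0} := by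
        ext t
        simp only [Finset.mem_filter, Finset.mem_range, Finset.mem_singleton]
        constructor
        · rintro ⟨h, _⟩; omega
        · rintro rfl; exact ⟨by omega, fun s hs => by omega⟩
      rw [recsCard, h1]
      simp [minF]
  | succ T ih =>
      have hnm : (T+1) ∉ Finset.range (T+1) := by simp
      have hMle : minF F T ≤ F T := minF_le F (le_refl T)
      rw [recsCard, Finset.range_add_one, Finset.filter_insert]
      by_cases hrec : F (T+1) < minF F T
      · have hp : ∀ s < T+1, F (T+1) < F s := fun s hs =>
          lt_of_lt_of_le hrec (minF_le F (Nat.lt_succ_iff.mp hs))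
        rw [if_pos hp, Finset.card_insert_of_notMem (fun h => hnm (Finset.mem_of_mem_filter _ h))]
        have hval : F (T+1) = minF F T - 1 := by
          have := hstep T
          omega
        have : minF F (T+1) = minF F T - 1 := by
          rw [minF_succ, hval]; omega
        rw [this]
        push_cast
        rw [recsCard] at ih
        omega
      · obtain ⟨s, hs, hFs⟩ := exists_minF F T
        have hnp : ¬ (∀ s < T+1, F (T+1) < F s) := by
          intro h
          exact hrec (hFs ▸ h s (Nat.lt_succ_of_le hs))
        rw [if_neg hnp]
        have : minF F (T+1) = minF F T := by
          rw [minF_succ]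
          omega
        rw [this]
        exact ih

private theorem cycle_count_s7 (F : ℕ → ℤ) {n m : ℕ} (hn : 0 < n)
    (hstep : ∀ t, F t - 1 ≤ F (t + 1)) (hper : ∀ t, F (t + n) = F t - m) :
    ((Finset.range n).filter (fun r => ∀ t < n, F (r + n) < F (r + t))).card = m := by
  -- replace the condition by the "record at r+n" condition
  have hcong : (Finset.range n).filter (fun r => ∀ t < n, F (r + n) < F (r + t)) =
      (Finset.range n).filter (fun r => ∀ s < r + n, F (r + n) < F s) := by
    apply Finset.filter_congr
    intro r hr
    rw [Finset.mem_range] at hr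
    constructor
    · intro h s hs
      by_cases hrs : r ≤ s
      · obtain ⟨t, rfl⟩ := Nat.exists_eq_add_of_le hrs
        exact h t (by omega)
      · -- s < r : use periodicity
        have h1 : F (s + n) = F s - m := hper s
        have h2 : ∃ t, s + n = r + t ∧ t < n := ⟨s + n - r, by omega, by omega⟩
        obtain ⟨t, ht, htn⟩ := h2
        have := h t htn
        rw [← ht] at this
        omega
    · intro h t ht
      exact h (r + t) (by omega)
  rw [hcong]
  -- bijection with records in [n, 2n)
  have hbij : ((Finset.range n).filter (fun r => ∀ s < r + n, F (r + n) < F s)).card =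
      ((Finset.range (2*n)).filter (fun t => (∀ s < t, F t < F s) ∧ n ≤ t)).card := by
    apply Finset.card_bij (fun r _ => r + n)
    · intro r hr
      simp only [Finset.mem_filter, Finset.mem_range] at hr ⊢
      exact ⟨by omega, hr.2, by omega⟩
    · intro a ha b hb hab
      omega
    · intro t ht
      simp only [Finset.mem_filter, Finset.mem_range] at ht
      refine ⟨t - n, ?_, by omega⟩
      simp only [Finset.mem_filter, Finset.mem_range]
      constructor
      · omega
      · intro s hs
        have : t - n + n = t := by omega
        rw [this]
        exact ht.2.1 s (by omega)
  rw [hbij]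
  -- split records below/above n
  have h1 : (Finset.range (2*n)).filter (fun t => (∀ s < t, F t < F s) ∧ ¬ n ≤ t) =
      (Finset.range n).filter (fun t => ∀ s < t, F t < F s) := by
    ext t
    simp only [Finset.mem_filter, Finset.mem_range]
    constructor
    · rintro ⟨ht, hrec, hn'⟩; exact ⟨by omega, hrec⟩
    · rintro ⟨ht, hrec⟩; exact ⟨by omega, hrec, by omega⟩
  have hsplit : ((Finset.range (2*n)).filter (fun t => (∀ s < t, F t < F s) ∧ n ≤ t)).card
      + recsCard F n = recsCard F (2*n) := by
    have h := Finset.card_filter_add_card_filter_not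
      (s := (Finset.range (2*n)).filter (fun t => ∀ s < t, F t < F s)) (p := fun t => n ≤ t)
    rw [Finset.filter_filter, Finset.filter_filter, h1] at h
    exact h
  have e1 : (recsCard F (2*n) : ℤ) = 1 + F 0 - minF F (2*n - 1) := by
    have h := recsCard_eq F hstep (2*n - 1)
    rwa [show 2*n - 1 + 1 = 2*n by omega] at h
  have e2 : (recsCard F n : ℤ) = 1 + F 0 - minF F (n - 1) := by
    have h := recsCard_eq F hstep (n - 1)
    rwa [show n - 1 + 1 = n by omega] at h
  have e3 : minF F (2*n-1) = minF F (n-1) - m := by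
    apply le_antisymm
    · obtain ⟨s, hs, hFs⟩ := exists_minF F (n-1)
      have h := hper s
      calc minF F (2*n-1) ≤ F (s+n) := minF_le F (by omega)
      _ = minF F (n-1) - m := by rw [h, hFs]
    · obtain ⟨s, hs, hFs⟩ := exists_minF F (2*n-1)
      rw [← hFs]
      by_cases hsn : s < n
      · have : minF F (n-1) ≤ F s := minF_le F (by omega)
        omega
      · have h := hper (s - n)
        rw [show s - n + n = s by omega] at h
        have : minF F (n-1) ≤ F (s - n) := minF_le F (by omega)
        omega
  omega

section Rot

variable {n k : ℕ}

private def per (e : Fin n → ℕ) (l : ℕ) : ℕ :=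
  if h : 0 < n then e ⟨l % n, Nat.mod_lt l h⟩ else 0

private lemma per_add (e : Fin n → ℕ) (l : ℕ) : per e (l + n) = per e l := by
  unfold per
  split
  · congr 1
    exact Fin.ext (by simp [Nat.add_mod_right])
  · rfl

private lemma per_lt (e : Fin n → ℕ) {l : ℕ} (hl : l < n) : per e l = e ⟨l, hl⟩ := by
  unfold per
  rw [dif_pos (by omega)]
  congr 1
  exact Fin.ext (by simp [Nat.mod_eq_of_lt hl])

private def FF (k : ℕ) (e : Fin n → ℕ) (t : ℕ) : ℤ :=
  k * ∑ l ∈ Finset.range t, (per e l : ℤ) - t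

private lemma FF_zero (e : Fin n → ℕ) : FF k e 0 = 0 := by simp [FF]

private lemma FF_step (e : Fin n → ℕ) (t : ℕ) :
    FF k e (t + 1) = FF k e t + (k * per e t - 1) := by
  unfold FF
  rw [Finset.sum_range_succ]
  push_cast
  ring

private lemma FF_per (hn : 0 < n) (e : Fin n → ℕ) (t : ℕ) :
    FF k e (t + n) = FF k e t + (k * ∑ i, (e i : ℤ) - n) := by
  induction t with
  | zero =>
      rw [FF_zero]
      unfold FF
      have : ∑ l ∈ Finset.range n, (per e l : ℤ) = ∑ i, (e i : ℤ) := by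
        rw [← Fin.sum_univ_eq_sum_range (fun l => (per e l : ℤ)) n]
        apply Finset.sum_congr rfl
        intro i _
        rw [per_lt e i.isLt]
      rw [zero_add, this]
      ring
  | succ t ih =>
      have h1 : t + 1 + n = (t + n) + 1 := by omega
      rw [h1, FF_step, FF_step, ih, per_add]
      ring

private def Good (k : ℕ) (e : Fin n → ℕ) (r : ℕ) : Prop :=
  ∀ t < n, FF k e (r + n) < FF k e (r + t)

private instance (e : Fin n → ℕ) (r : ℕ) : Decidable (Good k e r) := by
  unfold Good; infer_instance

private lemma good_count (hn : 0 < n) (e : Fin n → ℕ) (hj : k * (∑ i, e i) ≤ n) :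
    ((Finset.range n).filter (Good k e)).card = n - k * ∑ i, e i := by
  apply cycle_count_s7 (FF k e) hn
  · intro t
    rw [FF_step]
    have : (0:ℤ) ≤ k * per e t := by positivity
    omega
  · intro t
    rw [FF_per hn e t]
    have hc : ((∑ i, e i : ℕ) : ℤ) = ∑ i, (e i : ℤ) := by push_cast; rfl
    have : ((n - k * ∑ i, e i : ℕ) : ℤ) = (n : ℤ) - k * ∑ i, (e i : ℤ) := by
      rw [Nat.cast_sub hj]
      push_cast
      rfl
    omega

private def rot (c : Fin n) (e : Fin n → ℕ) : Fin n → ℕ := fun i => e (i + c)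

private lemma per_rot (hn : 0 < n) (c : Fin n) (e : Fin n → ℕ) (l : ℕ) :
    per (rot c e) l = per e (l + c.val) := by
  unfold per
  rw [dif_pos hn, dif_pos hn]
  show e (⟨l % n, _⟩ + c) = e ⟨(l + c.val) % n, _⟩
  congr 1
  rw [Fin.add_def]
  exact Fin.ext (by simp [Nat.mod_add_mod])

private lemma FF_rot (hn : 0 < n) (c : Fin n) (e : Fin n → ℕ) (t : ℕ) :
    FF k (rot c e) t = FF k e (c.val + t) - FF k e c.val := by
  induction t with
  | zero => rw [FF_zero]; simp
  | succ t ih =>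
      rw [FF_step, ih, show c.val + (t + 1) = (c.val + t) + 1 by omega, FF_step,
        per_rot hn c e t, Nat.add_comm t c.val]
      ring

private lemma good_rot (hn : 0 < n) (c : Fin n) (e : Fin n → ℕ) :
    Good k (rot c e) 0 ↔ Good k e c.val := by
  unfold Good
  simp only [Nat.zero_add]
  constructor
  · intro h t ht
    have := h t ht
    rw [FF_rot hn, FF_rot hn] at this
    omega
  · intro h t ht
    have := h t ht
    rw [FF_rot hn, FF_rot hn]
    omega

private lemma sum_rot (hn : 0 < n) (c : Fin n) (e : Fin n → ℕ) :
    ∑ i, rot c e i = ∑ i, e i := by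
  haveI : NeZero n := ⟨hn.ne'⟩
  exact Equiv.sum_comp (Equiv.addRight c) e

end Rot

section Count

variable {n k : ℕ}

private lemma card_good_shift (hn : 0 < n) (j : ℕ) {r : ℕ} (hr : r < n) :
    ((Finset.Nat.antidiagonalTuple n j).filter (fun e => Good k e r)).card =
    ((Finset.Nat.antidiagonalTuple n j).filter (fun e => Good k e 0)).card := by
  haveI : NeZero n := ⟨hn.ne'⟩
  set c : Fin n := ⟨r, hr⟩ with hc
  have hrotrot : ∀ f : Fin n → ℕ, rot c (rot (-c) f) = f := by
    intro f
    funext i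
    show f ((i + c) + -c) = f i
    rw [add_neg_cancel_right]
  have hrotrot' : ∀ f : Fin n → ℕ, rot (-c) (rot c f) = f := by
    intro f
    funext i
    show f ((i + -c) + c) = f i
    rw [neg_add_cancel_right]
  apply Finset.card_nbij' (rot c) (rot (-c))
  · intro e he
    rw [Finset.mem_coe] at he ⊢
    rw [Finset.mem_filter, Finset.Nat.mem_antidiagonalTuple] at he ⊢
    refine ⟨by rw [sum_rot hn]; exact he.1, ?_⟩
    rw [good_rot hn c e]
    exact he.2
  · intro f hf
    rw [Finset.mem_coe] at hf ⊢
    rw [Finset.mem_filter, Finset.Nat.mem_antidiagonalTuple] at hf ⊢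
    refine ⟨by rw [sum_rot hn]; exact hf.1, ?_⟩
    have : Good k (rot c (rot (-c) f)) 0 ↔ Good k (rot (-c) f) c.val := good_rot hn c _
    rw [hrotrot f] at this
    exact this.mp hf.2
  · intro e _
    exact hrotrot' e
  · intro f _
    exact hrotrot f

private lemma per_j_count (hn : 0 < n) (j : ℕ) (hj : k * j ≤ n) :
    n * ((Finset.Nat.antidiagonalTuple n j).filter (fun e => Good k e 0)).card
      = (n - k * j) * (Finset.Nat.antidiagonalTuple n j).card := by
  have key : ∑ e ∈ Finset.Nat.antidiagonalTuple n j,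
      ((Finset.range n).filter (Good k e)).card
      = (n - k * j) * (Finset.Nat.antidiagonalTuple n j).card := by
    rw [Finset.sum_congr rfl (fun e he => ?_), Finset.sum_const, smul_eq_mul, Nat.mul_comm]
    have hsum : ∑ i, e i = j := (Finset.Nat.mem_antidiagonalTuple).mp he
    rw [good_count hn e (by rw [hsum]; exact hj), hsum]
  have key2 : ∑ e ∈ Finset.Nat.antidiagonalTuple n j,
      ((Finset.range n).filter (Good k e)).card
      = n * ((Finset.Nat.antidiagonalTuple n j).filter (fun e => Good k e 0)).card := by
    have h1 : ∀ e : Fin n → ℕ, ((Finset.range n).filter (Good k e)).card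
        = ∑ r ∈ Finset.range n, if Good k e r then 1 else 0 := by
      intro e; rw [Finset.card_filter]
    simp_rw [h1]
    rw [Finset.sum_comm]
    have h2 : ∀ r ∈ Finset.range n, (∑ e ∈ Finset.Nat.antidiagonalTuple n j,
        if Good k e r then 1 else 0)
        = ((Finset.Nat.antidiagonalTuple n j).filter (fun e => Good k e 0)).card := by
      intro r hr
      rw [← Finset.card_filter, card_good_shift hn j (Finset.mem_range.mp hr)]
    rw [Finset.sum_congr rfl h2, Finset.sum_const, smul_eq_mul, Finset.card_range]
  rw [← key2, key]

private lemma card_adT (hn : 0 < n) (j : ℕ) :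
    (Finset.Nat.antidiagonalTuple n j).card = (n + j - 1).choose j := by
  have h1 : (Finset.Nat.antidiagonalTuple n j).card
      = Nat.card {x : Fin n → ℕ // x ∈ Finset.Nat.antidiagonalTuple n j} :=
    (Nat.card_eq_finsetCard _).symm
  have e1 : {x : Fin n → ℕ // x ∈ Finset.Nat.antidiagonalTuple n j}
      ≃ {P : Fin n → ℕ // ∑ i, P i = j} :=
    Equiv.subtypeEquiv (Equiv.refl _) (fun x => by
      simp [Finset.Nat.mem_antidiagonalTuple])
  rw [h1, Nat.card_congr (e1.trans (Sym.equivNatSumOfFintype (Fin n) j).symm),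
    Nat.card_eq_fintype_card, Sym.card_sym_eq_choose, Fintype.card_fin]

end Count

section Main

variable {n k : ℕ}

private lemma per_sum (e : Fin n → ℕ) :
    ∑ l ∈ Finset.range n, per e l = ∑ i, e i := by
  rw [← Fin.sum_univ_eq_sum_range (fun l => per e l) n]
  exact Finset.sum_congr rfl (fun i _ => per_lt e i.isLt)

private lemma good_zero_iff (hn : 0 < n) (e : Fin n → ℕ) (hj : k * ∑ i, e i ≤ n) :
    Good k e 0 ↔ ∀ t < n, t + 1 ≤ (n - k * ∑ i, e i) + k * ∑ l ∈ Finset.range t, per e l := by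
  have hFF : ∀ t : ℕ, FF k e t = ((k * ∑ l ∈ Finset.range t, per e l : ℕ) : ℤ) - (t : ℤ) := by
    intro t
    unfold FF
    push_cast
    ring
  unfold Good
  simp only [Nat.zero_add]
  constructor
  · intro h t ht
    have := h t ht
    rw [hFF, hFF, per_sum] at this
    omega
  · intro h t ht
    have := h t ht
    rw [hFF, hFF, per_sum]
    omega

private def toD (n k : ℕ) (e : Fin n → ℕ) : ℕ → ℕ := fun i =>
  if h : 1 ≤ i ∧ i ≤ n then k * e ⟨i - 1, by omega⟩
  else if i = 0 then n - k * ∑ i, e i else 0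

private lemma sum_toD_aux (hn : 0 < n) (e : Fin n → ℕ) (i : ℕ) (hi : i ≤ n) :
    ∑ l ∈ Finset.range (i + 1), toD n k e l
      = (n - k * ∑ i, e i) + k * ∑ l ∈ Finset.range i, per e l := by
  rw [Finset.sum_range_succ']
  have h0 : toD n k e 0 = n - k * ∑ i, e i := by
    unfold toD
    rw [dif_neg (by omega), if_pos rfl]
  have h1 : ∀ l ∈ Finset.range i, toD n k e (l + 1) = k * per e l := by
    intro l hl
    rw [Finset.mem_range] at hl
    have hln : l < n := by omega
    unfold toD
    rw [dif_pos (by omega), per_lt e hln]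
    congr 1
  rw [h0, Finset.sum_congr rfl h1, ← Finset.mul_sum]
  omega

end Main

section Main2

variable {n k : ℕ}

private def bigS (n k : ℕ) : Finset (Fin n → ℕ) :=
  (Finset.range (n / k + 1)).biUnion
    (fun j => (Finset.Nat.antidiagonalTuple n j).filter (fun e => Good k e 0))

private def P (n k : ℕ) (d : ℕ → ℕ) : Prop :=
  IsTreeDeg n d ∧ d 0 % k = n % k ∧ ∀ i, 1 ≤ i → i ≤ n → k ∣ d i

private def toE (n k : ℕ) (d : ℕ → ℕ) : Fin n → ℕ := fun i => d (i.val + 1) / k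

private lemma toE_facts (hn : 1 ≤ n) (hk : 1 ≤ k) (d : ℕ → ℕ) (hd : P n k d) :
    k * (∑ i, toE n k d i) = n - d 0 ∧ d 0 ≤ n ∧
      (∀ (i : ℕ) (h1 : 1 ≤ i) (h2 : i ≤ n), d i = k * toE n k d ⟨i - 1, by omega⟩) := by
  obtain ⟨⟨hz, hsum, hdom⟩, hmod, hdvd⟩ := hd
  have hdi : ∀ (i : ℕ) (h1 : 1 ≤ i) (h2 : i ≤ n), d i = k * toE n k d ⟨i - 1, by omega⟩ := by
    intro i h1 h2
    show d i = k * (d (i - 1 + 1) / k)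
    rw [show i - 1 + 1 = i by omega, Nat.mul_div_cancel' (hdvd i h1 h2)]
  have hs : ∑ i ∈ Finset.range (n+1), d i = (∑ i ∈ Finset.range n, d (i+1)) + d 0 :=
    Finset.sum_range_succ' d n
  have hs2 : ∑ i ∈ Finset.range n, d (i+1) = k * ∑ i, toE n k d i := by
    rw [← Fin.sum_univ_eq_sum_range (fun i => d (i+1)) n, Finset.mul_sum]
    apply Finset.sum_congr rfl
    intro i _
    have := hdi (i.val + 1) (by omega) (by omega)
    rw [this]
    congr 1
  refine ⟨by omega, by omega, hdi⟩

private lemma mem_bigS_iff (hn : 1 ≤ n) (hk : 1 ≤ k) (e : Fin n → ℕ) :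
    e ∈ bigS n k ↔ k * (∑ i, e i) ≤ n ∧ Good k e 0 := by
  unfold bigS
  rw [Finset.mem_biUnion]
  constructor
  · rintro ⟨j, hj, hmem⟩
    rw [Finset.mem_filter, Finset.Nat.mem_antidiagonalTuple] at hmem
    rw [Finset.mem_range] at hj
    refine ⟨?_, hmem.2⟩
    rw [hmem.1]
    have := (Nat.le_div_iff_mul_le hk).mp (by omega : j ≤ n / k)
    rwa [Nat.mul_comm]
  · rintro ⟨hle, hgood⟩
    refine ⟨∑ i, e i, ?_, ?_⟩
    · rw [Finset.mem_range]
      have : (∑ i, e i) ≤ n / k :=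
        (Nat.le_div_iff_mul_le hk).mpr (by rw [Nat.mul_comm]; exact hle)
      omega
    · rw [Finset.mem_filter, Finset.Nat.mem_antidiagonalTuple]
      exact ⟨rfl, hgood⟩

private lemma P_iff_toD (hn : 1 ≤ n) (hk : 1 ≤ k) (e : Fin n → ℕ) (he : e ∈ bigS n k) :
    P n k (toD n k e) := by
  rw [mem_bigS_iff hn hk] at he
  obtain ⟨hle, hgood⟩ := he
  have hn0 : 0 < n := hn
  have hchar := (good_zero_iff hn0 e hle).mp hgood
  have hd0pos : 1 ≤ n - k * ∑ i, e i := by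
    have := hchar 0 (by omega)
    simpa using this
  have hzero : ∀ i, n < i → toD n k e i = 0 := by
    intro i hi
    unfold toD
    rw [dif_neg (by omega), if_neg (by omega)]
  have hsum : ∑ i ∈ Finset.range (n + 1), toD n k e i = n := by
    have := sum_toD_aux (k := k) hn0 e n (le_refl n)
    rw [this, per_sum]
    omega
  have hdom : ∀ i, 1 ≤ i → i ≤ n → i ≤ ∑ l ∈ Finset.range i, toD n k e l := by
    intro i h1 h2
    have hin : i - 1 < n := by omega
    have := hchar (i - 1) hin
    have haux := sum_toD_aux (k := k) hn0 e (i - 1) (by omega)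
    rw [show i - 1 + 1 = i by omega] at haux
    omega
  have hmod : toD n k e 0 % k = n % k := by
    have h0 : toD n k e 0 = n - k * ∑ i, e i := by
      unfold toD
      rw [dif_neg (by omega), if_pos rfl]
    rw [h0]
    have h2 : n = (n - k * ∑ i, e i) + k * ∑ i, e i := by omega
    conv_rhs => rw [h2]
    rw [Nat.add_mul_mod_self_left]
  have hdvd : ∀ i, 1 ≤ i → i ≤ n → k ∣ toD n k e i := by
    intro i h1 h2
    unfold toD
    rw [dif_pos ⟨h1, h2⟩]
    exact Dvd.intro _ rfl
  exact ⟨⟨hzero, hsum, hdom⟩, hmod, hdvd⟩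

private lemma toE_mem_bigS (hn : 1 ≤ n) (hk : 1 ≤ k) (d : ℕ → ℕ) (hd : P n k d) :
    toE n k d ∈ bigS n k := by
  obtain ⟨hkj, hd0n, hdi⟩ := toE_facts hn hk d hd
  obtain ⟨⟨hz, hsum, hdom⟩, hmod, hdvd⟩ := hd
  have hn0 : 0 < n := hn
  have hle : k * (∑ i, toE n k d i) ≤ n := by omega
  rw [mem_bigS_iff hn hk]
  refine ⟨hle, (good_zero_iff hn0 _ hle).mpr ?_⟩
  intro t ht
  -- partial sums of d relate to partial sums of per (toE d)
  have haux : ∑ l ∈ Finset.range (t + 1), d l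
      = d 0 + k * ∑ l ∈ Finset.range t, per (toE n k d) l := by
    rw [Finset.sum_range_succ' d t]
    have h1 : ∀ l ∈ Finset.range t, d (l + 1) = k * per (toE n k d) l := by
      intro l hl
      rw [Finset.mem_range] at hl
      have hln : l < n := by omega
      rw [per_lt _ hln]
      have := hdi (l + 1) (by omega) (by omega)
      rw [this]
      congr 1
    rw [Finset.sum_congr rfl h1, ← Finset.mul_sum]
    omega
  have := hdom (t + 1) (by omega) (by omega)
  omega

private lemma left_inv_aux (hn : 1 ≤ n) (hk : 1 ≤ k) (d : ℕ → ℕ) (hd : P n k d) :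
    toD n k (toE n k d) = d := by
  obtain ⟨hkj, hd0n, hdi⟩ := toE_facts hn hk d hd
  obtain ⟨⟨hz, hsum, hdom⟩, hmod, hdvd⟩ := hd
  funext i
  unfold toD
  by_cases h : 1 ≤ i ∧ i ≤ n
  · rw [dif_pos h]
    exact (hdi i h.1 h.2).symm
  · rw [dif_neg h]
    by_cases h0 : i = 0
    · rw [if_pos h0, h0, hkj]
      omega
    · rw [if_neg h0]
      exact (hz i (by omega)).symm

private lemma right_inv_aux (hn : 1 ≤ n) (hk : 1 ≤ k) (e : Fin n → ℕ) :
    toE n k (toD n k e) = e := by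
  funext i
  show toD n k e (i.val + 1) / k = e i
  unfold toD
  rw [dif_pos (by omega)]
  rw [Nat.mul_div_cancel_left _ hk]
  congr 1

private lemma card_subtype (hn : 1 ≤ n) (hk : 1 ≤ k) :
    Nat.card {d : ℕ → ℕ // P n k d} = (bigS n k).card := by
  have Φ : {d : ℕ → ℕ // P n k d} ≃ {e : Fin n → ℕ // e ∈ bigS n k} :=
    { toFun := fun d => ⟨toE n k d.1, toE_mem_bigS hn hk d.1 d.2⟩
      invFun := fun e => ⟨toD n k e.1, P_iff_toD hn hk e.1 e.2⟩
      left_inv := fun d => Subtype.ext (left_inv_aux hn hk d.1 d.2)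
      right_inv := fun e => Subtype.ext (right_inv_aux hn hk e.1) }
  rw [Nat.card_congr Φ]
  exact Nat.card_eq_finsetCard _

/-- The size of the largest `k`-equivalence class of plane trees with `n+1` nodes:
trees whose multi-degree is congruent to `(n,0,…,0)` modulo `k`. -/
theorem largest_class_size (n k : ℕ) (hn : 1 ≤ n) (hk : 1 ≤ k) :
    n * Nat.card {d : ℕ → ℕ // IsTreeDeg n d ∧ d 0 % k = n % k ∧
        ∀ i, 1 ≤ i → i ≤ n → k ∣ d i} =
      ∑ j ∈ Finset.range (n / k + 1), (n - j * k) * (n + j - 1).choose j := by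
  have hP : {d : ℕ → ℕ // IsTreeDeg n d ∧ d 0 % k = n % k ∧
      ∀ i, 1 ≤ i → i ≤ n → k ∣ d i} = {d : ℕ → ℕ // P n k d} := rfl
  rw [hP, card_subtype hn hk]
  unfold bigS
  rw [Finset.card_biUnion]
  · rw [Finset.mul_sum]
    apply Finset.sum_congr rfl
    intro j hj
    rw [Finset.mem_range] at hj
    have hjk : k * j ≤ n := by
      have := (Nat.le_div_iff_mul_le hk).mp (by omega : j ≤ n / k)
      rwa [Nat.mul_comm]
    rw [per_j_count hn j hjk, card_adT hn j, Nat.mul_comm j k]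
  · intro j hj j' hj' hne
    apply Finset.disjoint_left.mpr
    intro e he he'
    rw [Finset.mem_filter, Finset.Nat.mem_antidiagonalTuple] at he he'
    exact hne (he.1.symm.trans he'.1)

end Main2
end

section
/- For all n ≥ 0 and k ≥ 1, the modular Catalan numbers satisfy the interlacing inequalities M_{k-1,n} ≤ C_{k,n} ≤ M_{k,n}, where C_{k,n} counts plane trees with n+1 nodes whose non-root nodes have degree less than k, and M_{k,n} counts plane trees with n+1 nodes all of whose nodes have degree at most k. -/
namespace MCI

/-- Partial sums of a degree sequence. -/
def S (d : ℕ → ℕ) (i : ℕ) : ℕ := ∑ j ∈ Finset.range i, d j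

/-- First position `p` where the partial-sum slack has dropped to at most `v`. -/
noncomputable def fh (d : ℕ → ℕ) (v : ℕ) : ℕ := sInf {p | S d (p + 1) ≤ p + v}

/-- Positions to be raised to `k` in the encoding. -/
noncomputable def Jset (k : ℕ) (d : ℕ → ℕ) : Finset ℕ :=
  (Finset.Icc 1 (d 0 / k)).image fun j => fh d (k * j)

/-- The encoding map. -/
noncomputable def enc (k : ℕ) (d : ℕ → ℕ) (p : ℕ) : ℕ :=
  if p ∈ Jset k d then k else if p = 0 then d 0 % k else d p

section

variable {n k : ℕ} {d : ℕ → ℕ}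

lemma S_succ (d : ℕ → ℕ) (p : ℕ) : S d (p + 1) = S d p + d p := Finset.sum_range_succ d p

lemma S_one (d : ℕ → ℕ) : S d 1 = d 0 := by simp [S]

lemma hne (hd : IsTreeDeg n d) (v : ℕ) : ({p | S d (p + 1) ≤ p + v} : Set ℕ).Nonempty := by
  refine ⟨n, ?_⟩
  have : S d (n + 1) = n := hd.2.1
  simp only [Set.mem_setOf_eq, this]
  omega

lemma fh_le (hd : IsTreeDeg n d) (v : ℕ) : fh d v ≤ n := by
  apply Nat.sInf_le
  have : S d (n + 1) = n := hd.2.1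
  simp only [Set.mem_setOf_eq, this]
  omega

lemma fh_spec (hd : IsTreeDeg n d) (v : ℕ) : S d (fh d v + 1) ≤ fh d v + v :=
  Nat.sInf_mem (hne hd v)

lemma fh_min (d : ℕ → ℕ) {v p : ℕ} (h : p < fh d v) : p + v < S d (p + 1) := by
  have := Nat.notMem_of_lt_sInf (s := {p | S d (p + 1) ≤ p + v}) h
  simp only [Set.mem_setOf_eq, not_le] at this
  exact this

lemma fh_eq (hd : IsTreeDeg n d) {v : ℕ} (h2 : v ≤ d 0) :
    S d (fh d v + 1) = fh d v + v := by
  have hs := fh_spec hd v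
  rcases Nat.eq_zero_or_pos (fh d v) with h | h
  · have h1 : S d (0 + 1) = d 0 := S_one d
    rw [h] at hs ⊢
    omega
  · have hm := fh_min d (v := v) (p := fh d v - 1) (by omega)
    have hfh : fh d v - 1 + 1 = fh d v := by omega
    rw [hfh] at hm
    have hss := S_succ d (fh d v)
    omega

lemma fh_entry (hd : IsTreeDeg n d) {v : ℕ} (h2 : v ≤ d 0) (h3 : 1 ≤ fh d v) :
    d (fh d v) = 0 := by
  have hs := fh_spec hd v
  have hm := fh_min d (v := v) (p := fh d v - 1) (by omega)
  have hfh : fh d v - 1 + 1 = fh d v := by omega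
  rw [hfh] at hm
  have hss := S_succ d (fh d v)
  omega

lemma fh_anti (hd : IsTreeDeg n d) {v v' : ℕ} (h : v ≤ v') : fh d v' ≤ fh d v := by
  apply Nat.sInf_le
  have := fh_spec hd v
  simp only [Set.mem_setOf_eq]
  omega

lemma kt_le (hk : 0 < k) : k * (d 0 / k) ≤ d 0 := by
  rw [mul_comm]; exact Nat.div_mul_le_self _ _

lemma kj_le (hk : 0 < k) {j : ℕ} (hj : j ∈ Finset.Icc 1 (d 0 / k)) :
    1 ≤ k * j ∧ k * j ≤ d 0 := by
  rw [Finset.mem_Icc] at hj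
  constructor
  · exact Nat.one_le_iff_ne_zero.mpr (Nat.mul_ne_zero (by omega) (by omega))
  · calc k * j ≤ k * (d 0 / k) := Nat.mul_le_mul_left k hj.2
      _ ≤ d 0 := kt_le hk

lemma fh_ne (hd : IsTreeDeg n d) (hk : 0 < k) {a b : ℕ} (ha : 1 ≤ a) (hab : a < b)
    (hb : k * b ≤ d 0) : fh d (k * a) ≠ fh d (k * b) := by
  intro h
  have hab' : k * a ≤ k * b := Nat.mul_le_mul_left k (le_of_lt hab)
  have e1 := fh_eq hd (v := k * a) (le_trans hab' hb)
  have e2 := fh_eq hd (v := k * b) hb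
  rw [h] at e1
  have hkk : k * a = k * b := by omega
  have : a = b := Nat.eq_of_mul_eq_mul_left hk hkk
  omega

lemma fh_injOn (hd : IsTreeDeg n d) (hk : 0 < k) :
    Set.InjOn (fun j => fh d (k * j)) ↑(Finset.Icc 1 (d 0 / k)) := by
  intro a ha b hb h
  simp only [Finset.coe_Icc, Set.mem_Icc] at ha hb
  by_contra hne
  rcases Nat.lt_or_ge a b with hl | hge
  · exact fh_ne hd hk ha.1 hl (le_trans (Nat.mul_le_mul_left k hb.2) (kt_le hk)) h
  · have hl : b < a := by omega
    exact fh_ne hd hk hb.1 hl (le_trans (Nat.mul_le_mul_left k ha.2) (kt_le hk)) h.symm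

lemma card_Jset (hd : IsTreeDeg n d) (hk : 0 < k) : (Jset k d).card = d 0 / k := by
  rw [Jset, Finset.card_image_of_injOn (fh_injOn hd hk), Nat.card_Icc]
  simp

lemma Jset_sub (hd : IsTreeDeg n d) : Jset k d ⊆ Finset.range (n + 1) := by
  intro p hp
  rw [Finset.mem_range]
  obtain ⟨j, _, rfl⟩ := Finset.mem_image.mp hp
  have := fh_le hd (k * j)
  omega

lemma mem_Jset_entry (hd : IsTreeDeg n d) (hk : 0 < k) {p : ℕ} (hp : p ∈ Jset k d)
    (h1 : p ≠ 0) : d p = 0 := by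
  obtain ⟨j, hj, rfl⟩ := Finset.mem_image.mp hp
  exact fh_entry hd (kj_le hk hj).2 (by omega)

lemma zero_mem_Jset (hd : IsTreeDeg n d) (hk : 0 < k) (h0 : 0 ∈ Jset k d) :
    d 0 = k * (d 0 / k) := by
  obtain ⟨j, hj, hfh⟩ := Finset.mem_image.mp h0
  have hs := fh_spec hd (k * j)
  rw [hfh] at hs
  have h1 : S d (0 + 1) = d 0 := S_one d
  have h2 := (kj_le hk hj).2
  have h3 : k * j ≤ k * (d 0 / k) := Nat.mul_le_mul_left k (Finset.mem_Icc.mp hj).2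
  have h4 := kt_le (d := d) hk
  omega

lemma zero_mem_Jset_mod (hd : IsTreeDeg n d) (hk : 0 < k) (h0 : 0 ∈ Jset k d) :
    d 0 % k = 0 := by
  have h := zero_mem_Jset hd hk h0
  conv_lhs => rw [h]
  exact Nat.mul_mod_right k _

lemma sum_enc (hd : IsTreeDeg n d) (hk : 0 < k) (i : ℕ) (hi : 1 ≤ i) :
    (∑ p ∈ Finset.range i, enc k d p) + d 0
      = S d i + k * ((Jset k d ∩ Finset.range i).card) + d 0 % k := by
  classical
  have hsplit_e := Finset.sum_inter_add_sum_sdiff (Finset.range i) (Jset k d) (enc k d)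
  have hsplit_d := Finset.sum_inter_add_sum_sdiff (Finset.range i) (Jset k d) d
  have hAe : ∑ p ∈ Finset.range i ∩ Jset k d, enc k d p
      = k * ((Jset k d ∩ Finset.range i).card) := by
    rw [Finset.sum_congr rfl (fun p hp => show enc k d p = k by
      simp [enc, (Finset.mem_inter.mp hp).2]), Finset.sum_const, smul_eq_mul,
      Finset.inter_comm, mul_comm]
  have h0r : 0 ∈ Finset.range i := Finset.mem_range.mpr (by omega)
  have hSd : S d i = ∑ p ∈ Finset.range i, d p := rfl
  by_cases h0 : 0 ∈ Jset k d
  · have hr0 : d 0 % k = 0 := zero_mem_Jset_mod hd hk h0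
    have hAd : ∑ p ∈ Finset.range i ∩ Jset k d, d p = d 0 := by
      apply Finset.sum_eq_single_of_mem 0 (Finset.mem_inter.mpr ⟨h0r, h0⟩)
      intro b hb hb0
      exact mem_Jset_entry hd hk (Finset.mem_inter.mp hb).2 hb0
    have hDe : ∑ p ∈ Finset.range i \ Jset k d, enc k d p
        = ∑ p ∈ Finset.range i \ Jset k d, d p := by
      apply Finset.sum_congr rfl
      intro p hp
      have hpJ : p ∉ Jset k d := (Finset.mem_sdiff.mp hp).2
      have hp0 : p ≠ 0 := by rintro rfl; exact hpJ h0
      simp [enc, hpJ, hp0]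
    set KC := k * ((Jset k d ∩ Finset.range i).card) with hKC
    omega
  · have hAd : ∑ p ∈ Finset.range i ∩ Jset k d, d p = 0 := by
      apply Finset.sum_eq_zero
      intro p hp
      have hpJ : p ∈ Jset k d := (Finset.mem_inter.mp hp).2
      have hp0 : p ≠ 0 := by rintro rfl; exact h0 hpJ
      exact mem_Jset_entry hd hk hpJ hp0
    have h0D : 0 ∈ Finset.range i \ Jset k d := Finset.mem_sdiff.mpr ⟨h0r, h0⟩
    have hDe := Finset.add_sum_erase _ (enc k d) h0D
    have hDd := Finset.add_sum_erase _ d h0D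
    have henc0 : enc k d 0 = d 0 % k := by simp [enc, h0]
    have hEe : ∑ p ∈ (Finset.range i \ Jset k d).erase 0, enc k d p
        = ∑ p ∈ (Finset.range i \ Jset k d).erase 0, d p := by
      apply Finset.sum_congr rfl
      intro p hp
      have hp0 : p ≠ 0 := (Finset.mem_erase.mp hp).1
      have hpJ : p ∉ Jset k d := (Finset.mem_sdiff.mp (Finset.mem_erase.mp hp).2).2
      simp [enc, hpJ, hp0]
    set KC := k * ((Jset k d ∩ Finset.range i).card) with hKC
    omega

lemma enc_isTreeDeg (hd : IsTreeDeg n d) (hk : 0 < k) : IsTreeDeg n (enc k d) := by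
  refine ⟨?_, ?_, ?_⟩
  · intro i hi
    have hiJ : i ∉ Jset k d := by
      intro h
      have := Finset.mem_range.mp (Jset_sub hd h)
      omega
    have hi0 : i ≠ 0 := by omega
    simp [enc, hiJ, hi0, hd.1 i hi]
  · have hs := sum_enc hd hk (n + 1) (by omega)
    have hJ : Jset k d ∩ Finset.range (n + 1) = Jset k d :=
      Finset.inter_eq_left.mpr (Jset_sub hd)
    rw [hJ, card_Jset hd hk] at hs
    have hSn : S d (n + 1) = n := hd.2.1
    have hdm := Nat.div_add_mod (d 0) k
    set KT := k * (d 0 / k) with hKT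
    rw [hSn] at hs
    omega
  · intro i h1 hin
    have hs := sum_enc hd hk i h1
    have hdm := Nat.div_add_mod (d 0) k
    set t := d 0 / k with ht
    set c := (Jset k d ∩ Finset.range i).card with hc
    have hct : c ≤ t := by
      have h := Finset.card_le_card
        (Finset.inter_subset_left (s₁ := Jset k d) (s₂ := Finset.range i))
      rw [card_Jset hd hk] at h
      exact h
    by_cases hcase : t ≤ c
    · have hceq : c = t := le_antisymm hct hcase
      have hSi : i ≤ S d i := hd.2.2 i h1 hin
      rw [hceq] at hs
      set KT := k * t with hKT
      omega
    · push_neg at hcase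
      set j0 := t - c with hj0
      have hj01 : 1 ≤ j0 := by omega
      have hj0t : j0 ≤ t := by omega
      have hfh : i ≤ fh d (k * j0) := by
        by_contra hcon
        push_neg at hcon
        have hsub : (Finset.Icc j0 t).image (fun j => fh d (k * j))
            ⊆ Jset k d ∩ Finset.range i := by
          intro p hp
          obtain ⟨j, hj, rfl⟩ := Finset.mem_image.mp hp
          rw [Finset.mem_Icc] at hj
          refine Finset.mem_inter.mpr ⟨?_, ?_⟩
          · exact Finset.mem_image.mpr ⟨j, Finset.mem_Icc.mpr ⟨by omega, hj.2⟩, rfl⟩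
          · rw [Finset.mem_range]
            have : fh d (k * j) ≤ fh d (k * j0) :=
              fh_anti hd (Nat.mul_le_mul_left k hj.1)
            omega
        have hinj : Set.InjOn (fun j => fh d (k * j)) ↑(Finset.Icc j0 t) := by
          apply (fh_injOn hd hk).mono
          intro x hx
          simp only [Finset.coe_Icc, Set.mem_Icc] at hx ⊢
          omega
        have hcard : (Finset.Icc j0 t).card ≤ c := by
          rw [← Finset.card_image_of_injOn hinj]
          exact Finset.card_le_card hsub
        rw [Nat.card_Icc] at hcard
        omega
      have hkey : i + k * j0 ≤ S d i := by
        have hm := fh_min d (v := k * j0) (p := i - 1) (by omega)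
        have : i - 1 + 1 = i := by omega
        rw [this] at hm
        omega
      have hmul : k * j0 + k * c = k * t := by
        rw [← Nat.mul_add]
        congr 1
        omega
      set A := k * j0 with hA
      set B := k * c with hB
      set C := k * t with hC
      omega

lemma enc_le (hd : IsTreeDeg n d) (hk : 0 < k)
    (hB : ∀ i, 1 ≤ i → i ≤ n → d i < k) (i : ℕ) (hi : i ≤ n) : enc k d i ≤ k := by
  unfold enc
  split_ifs with h1 h2
  · exact le_rfl
  · exact le_of_lt (Nat.mod_lt _ hk)
  · rcases Nat.eq_zero_or_pos i with h | h
    · exact absurd h h2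
    · exact le_of_lt (hB i h hi)

lemma mem_Jset_iff_enc (hd : IsTreeDeg n d) (hk : 0 < k)
    (hB : ∀ i, 1 ≤ i → i ≤ n → d i < k) (p : ℕ) :
    p ∈ Jset k d ↔ enc k d p = k := by
  constructor
  · intro h; simp [enc, h]
  · intro h
    by_contra hp
    rw [enc, if_neg hp] at h
    by_cases h0 : p = 0
    · rw [if_pos h0] at h
      have := Nat.mod_lt (d 0) hk
      omega
    · rw [if_neg h0] at h
      by_cases hn : p ≤ n
      · have := hB p (by omega) hn
        omega
      · have := hd.1 p (by omega)
        omega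

lemma enc_inj {d' : ℕ → ℕ} (hd : IsTreeDeg n d) (hd' : IsTreeDeg n d') (hk : 0 < k)
    (hB : ∀ i, 1 ≤ i → i ≤ n → d i < k) (hB' : ∀ i, 1 ≤ i → i ≤ n → d' i < k)
    (h : enc k d = enc k d') : d = d' := by
  have hJ : Jset k d = Jset k d' := by
    ext p
    rw [mem_Jset_iff_enc hd hk hB, mem_Jset_iff_enc hd' hk hB', h]
  have ht : d 0 / k = d' 0 / k := by
    rw [← card_Jset hd hk, ← card_Jset hd' hk, hJ]
  have h0 : d 0 = d' 0 := by
    by_cases h0J : 0 ∈ Jset k d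
    · have e1 := zero_mem_Jset hd hk h0J
      have e2 := zero_mem_Jset hd' hk (hJ ▸ h0J)
      rw [e1, e2, ht]
    · have hh := congrFun h 0
      have e1 : enc k d 0 = d 0 % k := by simp [enc, h0J]
      have e2 : enc k d' 0 = d' 0 % k := by simp [enc, hJ ▸ h0J]
      have hdm := Nat.div_add_mod (d 0) k
      have hdm' := Nat.div_add_mod (d' 0) k
      rw [e1, e2] at hh
      rw [ht] at hdm
      set KT := k * (d' 0 / k) with hKT
      omega
  funext p
  rcases Nat.eq_zero_or_pos p with hp | hp
  · rw [hp]; exact h0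
  · by_cases hpJ : p ∈ Jset k d
    · rw [mem_Jset_entry hd hk hpJ (by omega), mem_Jset_entry hd' hk (hJ ▸ hpJ) (by omega)]
    · have hh := congrFun h p
      have hp0 : p ≠ 0 := by omega
      have e1 : enc k d p = d p := by simp [enc, hpJ, hp0]
      have e2 : enc k d' p = d' p := by simp [enc, hJ ▸ hpJ, hp0]
      rw [e1, e2] at hh
      exact hh

end

lemma finite_aux (n : ℕ) (P : (ℕ → ℕ) → Prop) :
    Finite {d : ℕ → ℕ // IsTreeDeg n d ∧ P d} := by
  have hbound : ∀ (x : {d : ℕ → ℕ // IsTreeDeg n d ∧ P d}) (i : ℕ), x.1 i ≤ n := by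
    intro x i
    by_cases hi : i ≤ n
    · have h := Finset.single_le_sum (f := x.1) (fun j _ => Nat.zero_le _)
        (Finset.mem_range.mpr (by omega : i < n + 1))
      rw [x.2.1.2.1] at h
      exact h
    · rw [x.2.1.1 i (by omega)]
      exact Nat.zero_le _
  apply Finite.of_injective
    (fun x : {d : ℕ → ℕ // IsTreeDeg n d ∧ P d} =>
      (fun i : Fin (n + 1) =>
        (⟨x.1 i, Nat.lt_succ_of_le (hbound x i)⟩ : Fin (n + 1)) : Fin (n + 1) → Fin (n + 1)))
  · intro a b hab
    apply Subtype.ext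
    funext i
    by_cases hi : i ≤ n
    · have := congrFun hab ⟨i, by omega⟩
      exact congrArg Fin.val this
    · rw [a.2.1.1 i (by omega), b.2.1.1 i (by omega)]

end MCI

/-- Interlacing inequalities `M_{k-1,n} ≤ C_{k,n} ≤ M_{k,n}`. -/
theorem motzkin_catalan_interlacing (n k : ℕ) (hk : 1 ≤ k) :
    Nat.card {d : ℕ → ℕ // IsTreeDeg n d ∧ ∀ i, i ≤ n → d i ≤ k - 1} ≤
      Nat.card {d : ℕ → ℕ // IsTreeDeg n d ∧ ∀ i, 1 ≤ i → i ≤ n → d i < k} ∧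
    Nat.card {d : ℕ → ℕ // IsTreeDeg n d ∧ ∀ i, 1 ≤ i → i ≤ n → d i < k} ≤
      Nat.card {d : ℕ → ℕ // IsTreeDeg n d ∧ ∀ i, i ≤ n → d i ≤ k} := by
  haveI h1 := MCI.finite_aux n (fun d => ∀ i, 1 ≤ i → i ≤ n → d i < k)
  haveI h2 := MCI.finite_aux n (fun d => ∀ i, i ≤ n → d i ≤ k)
  constructor
  · apply Nat.card_le_card_of_injective
      (fun x : {d : ℕ → ℕ // IsTreeDeg n d ∧ ∀ i, i ≤ n → d i ≤ k - 1} =>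
        (⟨x.1, x.2.1, fun i _ hi => by have := x.2.2 i hi; omega⟩ :
          {d : ℕ → ℕ // IsTreeDeg n d ∧ ∀ i, 1 ≤ i → i ≤ n → d i < k}))
    intro a b hab
    have hv := congrArg Subtype.val hab
    exact Subtype.ext hv
  · apply Nat.card_le_card_of_injective
      (fun x : {d : ℕ → ℕ // IsTreeDeg n d ∧ ∀ i, 1 ≤ i → i ≤ n → d i < k} =>
        (⟨MCI.enc k x.1, MCI.enc_isTreeDeg x.2.1 hk,
          MCI.enc_le x.2.1 hk x.2.2⟩ :
          {d : ℕ → ℕ // IsTreeDeg n d ∧ ∀ i, i ≤ n → d i ≤ k}))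
    intro a b hab
    have hv := congrArg Subtype.val hab
    exact Subtype.ext (MCI.enc_inj a.2.1 b.2.1 hk a.2.2 b.2.2 hv)
end

section
/- The generating functions C_k(z) = Σ_{n≥0} C_{k,n} z^{n+1} and M_{k-1}(z) = Σ_{n≥0} M_{k-1,n} z^{n+1} satisfy C_k(z)·(1 - M_{k-1}(z)) = z, where C_{k,n} counts plane trees with n+1 nodes whose non-root nodes have degree < k, and M_{k-1,n} counts plane trees with n+1 nodes all of degree ≤ k-1. -/
/-- The generalized Motzkin number `M_{k,n}`: the number of plane trees with `n+1`
nodes all of whose nodes have degree at most `k`. -/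
noncomputable def motzkinNum (k n : ℕ) : ℕ :=
  Nat.card {d : ℕ → ℕ // IsTreeDeg n d ∧ ∀ i, i ≤ n → d i ≤ k}

/-- The modular Catalan number `C_{k,n}`: the number of plane trees with `n+1`
nodes whose non-root nodes have degree less than `k`. -/
noncomputable def modCatalanNum (k n : ℕ) : ℕ :=
  Nat.card {d : ℕ → ℕ // IsTreeDeg n d ∧ ∀ i, 1 ≤ i → i ≤ n → d i < k}

/-- The generating function `M_k(z) = ∑_{n≥0} M_{k,n} z^{n+1}`. -/
noncomputable def Mgf (k : ℕ) : PowerSeries ℤ :=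
  PowerSeries.mk fun m => if m = 0 then 0 else (motzkinNum k (m - 1) : ℤ)

/-- The generating function `C_k(z) = ∑_{n≥0} C_{k,n} z^{n+1}`. -/
noncomputable def Cgf (k : ℕ) : PowerSeries ℤ :=
  PowerSeries.mk fun m => if m = 0 then 0 else (modCatalanNum k (m - 1) : ℤ)

open Finset

lemma treeDeg_le {n : ℕ} {d : ℕ → ℕ} (hd : IsTreeDeg n d) (i : ℕ) : d i ≤ n := by
  rcases Nat.lt_or_ge n i with h | h
  · rw [hd.1 i h]; exact Nat.zero_le _
  · calc d i ≤ ∑ j ∈ range (n+1), d j :=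
        Finset.single_le_sum (fun j _ => Nat.zero_le _) (mem_range.mpr (Nat.lt_succ_of_le h))
      _ = n := hd.2.1

instance finite_treeDeg (n : ℕ) (P : (ℕ → ℕ) → Prop) :
    Finite {d : ℕ → ℕ // IsTreeDeg n d ∧ P d} := by
  apply Finite.of_injective (β := Fin (n+1) → Fin (n+1))
    (fun d i => ⟨d.1 i, Nat.lt_succ_of_le (treeDeg_le d.2.1 i)⟩)
  intro d d' h
  apply Subtype.ext; funext i
  rcases Nat.lt_or_ge n i with hi | hi
  · rw [d.2.1.1 i hi, d'.2.1.1 i hi]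
  · simpa using congrArg Fin.val (congrFun h ⟨i, Nat.lt_succ_of_le hi⟩)

def fwd (a : ℕ) (e f : ℕ → ℕ) : ℕ → ℕ := fun i =>
  if i = 0 then f 0 + 1 else if i ≤ a + 1 then e (i - 1) else f (i - a - 1)

lemma fwd_sum_low {a : ℕ} {e f : ℕ → ℕ} {i : ℕ} (h1 : 1 ≤ i) (h2 : i ≤ a + 2) :
    ∑ j ∈ range i, fwd a e f j = f 0 + 1 + ∑ j ∈ range (i - 1), e j := by
  obtain ⟨t, rfl⟩ : ∃ t, i = 1 + t := ⟨i - 1, by omega⟩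
  rw [Finset.sum_range_add]
  have h0 : ∑ j ∈ range 1, fwd a e f j = f 0 + 1 := by simp [fwd]
  rw [h0]
  have ht : 1 + t - 1 = t := by omega
  rw [ht]
  congr 1
  apply Finset.sum_congr rfl
  intro x hx
  rw [mem_range] at hx
  simp only [fwd]
  rw [if_neg (by omega), if_pos (by omega)]
  congr 1; omega

lemma fwd_sum_high {a : ℕ} {e f : ℕ → ℕ} (hsum : ∑ j ∈ range (a+1), e j = a)
    {i : ℕ} (h2 : a + 2 ≤ i) :
    ∑ j ∈ range i, fwd a e f j = 1 + a + ∑ j ∈ range (i - a - 1), f j := by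
  obtain ⟨t, rfl⟩ : ∃ t, i = (a + 2) + t := ⟨i - a - 2, by omega⟩
  rw [Finset.sum_range_add]
  have h0 : ∑ j ∈ range (a+2), fwd a e f j = f 0 + 1 + a := by
    rw [fwd_sum_low (by omega) (le_refl _)]
    have : a + 2 - 1 = a + 1 := by omega
    rw [this, hsum]
  rw [h0]
  have h1 : ∀ x ∈ range t, fwd a e f (a + 2 + x) = f (x + 1) := by
    intro x hx
    simp only [fwd]
    rw [if_neg (by omega), if_neg (by omega)]
    congr 1; omega
  rw [Finset.sum_congr rfl h1]
  have h3 : a + 2 + t - a - 1 = t + 1 := by omega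
  rw [h3, Finset.sum_range_succ']
  ring

lemma fwd_isTreeDeg {a b n : ℕ} {e f : ℕ → ℕ} (hn : n = a + 1 + b)
    (he : IsTreeDeg a e) (hf : IsTreeDeg b f) : IsTreeDeg n (fwd a e f) := by
  obtain ⟨he1, he2, he3⟩ := he
  obtain ⟨hf1, hf2, hf3⟩ := hf
  refine ⟨?_, ?_, ?_⟩
  · intro i hi
    simp only [fwd]
    rw [if_neg (by omega), if_neg (by omega)]
    exact hf1 _ (by omega)
  · rw [fwd_sum_high he2 (by omega)]
    have h : n + 1 - a - 1 = b + 1 := by omega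
    rw [h, hf2]; omega
  · intro i h1 h2
    rcases le_or_gt i (a+1) with hia | hia
    · rw [fwd_sum_low h1 (by omega)]
      rcases Nat.eq_or_lt_of_le h1 with h | h
      · simp only [← h]
        simp
      · have := he3 (i-1) (by omega) (by omega)
        omega
    · rw [fwd_sum_high he2 (by omega)]
      have h0 : 1 ≤ ∑ j ∈ range 1, f j := hf3 1 le_rfl (by omega)
      have := hf3 (i - a - 1) (by omega) (by omega)
      simp only [range_one, sum_singleton] at h0
      rcases Nat.eq_or_lt_of_le (show a + 2 ≤ i by omega) with h | h
      · have hr : i - a - 1 = 1 := by omega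
        rw [hr]
        simp only [range_one, sum_singleton]
        omega
      · omega


/-- shifted partial sums of `fwd` agree with those of `e`. -/
lemma fwd_shift_sum {a : ℕ} {e f : ℕ → ℕ} {t : ℕ} (ht : t ≤ a + 1) :
    ∑ i ∈ range t, fwd a e f (i + 1) = ∑ i ∈ range t, e i := by
  apply Finset.sum_congr rfl
  intro i hi
  rw [mem_range] at hi
  simp only [fwd]
  rw [if_neg (by omega), if_pos (by omega)]
  simp

noncomputable def Fmap (k n : ℕ) (hk : 1 ≤ k)
    (x : Σ a : Fin n, ({d : ℕ → ℕ // IsTreeDeg a.1 d ∧ ∀ i, i ≤ a.1 → d i ≤ k - 1} ×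
      {d : ℕ → ℕ // IsTreeDeg (n - 1 - a.1) d ∧ ∀ i, 1 ≤ i → i ≤ n - 1 - a.1 → d i < k})) :
    {d : ℕ → ℕ // IsTreeDeg n d ∧ ∀ i, 1 ≤ i → i ≤ n → d i < k} :=
  ⟨fwd x.1.1 x.2.1.1 x.2.2.1, by
    obtain ⟨⟨a, ha⟩, ⟨e, he, hebd⟩, ⟨f, hf, hfbd⟩⟩ := x
    dsimp only at he hebd hf hfbd ⊢
    refine ⟨fwd_isTreeDeg (by omega) he hf, ?_⟩
    intro i h1 h2
    by_cases hia : i ≤ a + 1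
    · simp only [fwd]
      rw [if_neg (by omega), if_pos hia]
      have := hebd (i-1) (by omega)
      omega
    · simp only [fwd]
      rw [if_neg (by omega), if_neg hia]
      exact hfbd (i - a - 1) (by omega) (by omega)⟩

lemma Fmap_bijective (k n : ℕ) (hk : 1 ≤ k) (hn : 1 ≤ n) :
    Function.Bijective (Fmap k n hk) := by
  constructor
  · rintro ⟨⟨a1, ha1⟩, ⟨e1, he1, he1b⟩, ⟨f1, hf1, hf1b⟩⟩
      ⟨⟨a2, ha2⟩, ⟨e2, he2, he2b⟩, ⟨f2, hf2, hf2b⟩⟩ h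
    dsimp only at he1 he1b hf1 hf1b he2 he2b hf2 hf2b
    have hd : fwd a1 e1 f1 = fwd a2 e2 f2 := congrArg Subtype.val h
    have key : ∀ (a a' : ℕ) (e f e' f' : ℕ → ℕ), IsTreeDeg a e → IsTreeDeg a' e' →
        fwd a e f = fwd a' e' f' → ¬ (a < a') := by
      intro a a' e f e' f' he he' hfw hlt
      have h1 : ∑ i ∈ range (a+1), fwd a e f (i+1) = a := by
        rw [fwd_shift_sum (by omega)]; exact he.2.1
      have h2 : a + 1 ≤ ∑ i ∈ range (a+1), fwd a' e' f' (i+1) := by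
        rw [fwd_shift_sum (by omega)]
        exact he'.2.2 (a+1) (by omega) (by omega)
      rw [hfw] at h1
      omega
    have haa : a1 = a2 := by
      rcases lt_trichotomy a1 a2 with h' | h' | h'
      · exact absurd h' (key a1 a2 e1 f1 e2 f2 he1 he2 hd)
      · exact h'
      · exact absurd h' (key a2 a1 e2 f2 e1 f1 he2 he1 hd.symm)
    subst haa
    have hee : e1 = e2 := by
      funext i
      rcases le_or_gt i a1 with hi | hi
      · have := congrFun hd (i + 1)
        simp only [fwd] at this
        rw [if_neg (by omega), if_pos (by omega), if_neg (by omega), if_pos (by omega)] at this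
        simpa using this
      · rw [he1.1 i hi, he2.1 i hi]
    have hff : f1 = f2 := by
      funext i
      rcases Nat.eq_zero_or_pos i with rfl | hi
      · have := congrFun hd 0
        simp only [fwd] at this
        norm_num at this
        omega
      · have := congrFun hd (i + a1 + 1)
        simp only [fwd] at this
        rw [if_neg (by omega), if_neg (by omega), if_neg (by omega), if_neg (by omega)] at this
        have hidx : i + a1 + 1 - a1 - 1 = i := by omega
        rwa [hidx] at this
    subst hee; subst hff
    rfl
  · rintro ⟨d, hd, hbd⟩
    have hd0 : 1 ≤ d 0 := by
      have := hd.2.2 1 le_rfl hn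
      simpa using this
    have hsum' : ∑ i ∈ range n, d (i+1) + d 0 = n := by
      have := hd.2.1
      rwa [Finset.sum_range_succ'] at this
    have hex : ∃ s, (∑ i ∈ range s, d (i+1)) + 1 ≤ s := ⟨n, by omega⟩
    set s0 := Nat.find hex with hs0
    have hs : (∑ i ∈ range s0, d (i+1)) + 1 ≤ s0 := Nat.find_spec hex
    have hmin : ∀ t, t < s0 → t ≤ ∑ i ∈ range t, d (i+1) := by
      intro t ht
      have := Nat.find_min hex ht
      omega
    have hs1 : 1 ≤ s0 := by omega
    have hsn : s0 ≤ n := Nat.find_le (by omega)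
    have heq : ∑ i ∈ range s0, d (i+1) = s0 - 1 := by
      have h1 := hmin (s0 - 1) (by omega)
      have h2 : ∑ i ∈ range (s0 - 1 + 1), d (i+1) = ∑ i ∈ range (s0-1), d (i+1) + d (s0-1+1) :=
        Finset.sum_range_succ _ _
      have h3 : s0 - 1 + 1 = s0 := by omega
      rw [h3] at h2
      omega
    set a := s0 - 1 with hadef
    set b := n - 1 - a with hbdef
    set e : ℕ → ℕ := fun i => if i ≤ a then d (i+1) else 0 with hedef
    set f : ℕ → ℕ := fun i => if i = 0 then d 0 - 1 else d (i + s0) with hfdef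
    have hf0 : f 0 = d 0 - 1 := by simp [hfdef]
    have hesum : ∑ i ∈ range (a+1), e i = a := by
      have hc : ∀ i ∈ range (a+1), e i = d (i+1) := by
        intro i hi; rw [mem_range] at hi
        simp only [hedef]; rw [if_pos (by omega)]
      rw [Finset.sum_congr rfl hc]
      have h3 : a + 1 = s0 := by omega
      rw [h3]; omega
    have hsplit : ∀ t, ∑ x ∈ range (s0 + 1 + t), d x
        = d 0 + (s0 - 1) + ∑ x ∈ range t, d (x + s0 + 1) := by
      intro t
      rw [Finset.sum_range_add, Finset.sum_range_succ', heq]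
      have h4 : a + d 0 = d 0 + (s0 - 1) := by omega
      rw [h4]
      congr 1
      apply Finset.sum_congr rfl
      intro x _
      congr 1
      omega
    have hfs : ∀ m, ∑ i ∈ range m, f (i+1) = ∑ x ∈ range m, d (x + s0 + 1) := by
      intro m
      apply Finset.sum_congr rfl
      intro x _
      simp only [hfdef]
      rw [if_neg (by omega)]
      congr 1
      omega
    have htot : d 0 + (s0 - 1) + ∑ x ∈ range b, d (x + s0 + 1) = n := by
      rw [← hsplit]
      have h5 : s0 + 1 + b = n + 1 := by omega
      rw [h5]
      exact hd.2.1
    have hfe : IsTreeDeg b f := by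
      refine ⟨?_, ?_, ?_⟩
      · intro i hi
        simp only [hfdef]
        rw [if_neg (by omega)]
        exact hd.1 _ (by omega)
      · rw [Finset.sum_range_succ', hfs, hf0]
        omega
      · intro t h1 h2
        obtain ⟨u, rfl⟩ : ∃ u, t = u + 1 := ⟨t - 1, by omega⟩
        have h6 := hd.2.2 (s0 + 1 + u) (by omega) (by omega)
        rw [hsplit] at h6
        rw [Finset.sum_range_succ', hfs, hf0]
        omega
    have hee : IsTreeDeg a e := by
      refine ⟨?_, hesum, ?_⟩
      · intro i hi
        simp only [hedef]
        rw [if_neg (by omega)]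
      · intro t h1 h2
        have hc : ∀ i ∈ range t, e i = d (i+1) := by
          intro i hi; rw [mem_range] at hi
          simp only [hedef]; rw [if_pos (by omega)]
        rw [Finset.sum_congr rfl hc]
        exact hmin t (by omega)
    refine ⟨⟨⟨a, by omega⟩, ⟨⟨e, ?_, ?_⟩, ⟨f, ?_, ?_⟩⟩⟩, ?_⟩
    · exact hee
    · intro i hi
      dsimp only at hi
      simp only [hedef]
      rw [if_pos hi]
      have := hbd (i+1) (by omega) (by omega)
      omega
    · exact hfe
    · intro i h1 h2
      dsimp only at h2
      simp only [hfdef]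
      rw [if_neg (by omega)]
      exact hbd (i + s0) (by omega) (by omega)
    · apply Subtype.ext
      show fwd a e f = d
      funext i
      rcases Nat.eq_zero_or_pos i with rfl | hi1
      · have hz : fwd a e f 0 = f 0 + 1 := by simp [fwd]
        rw [hz, hf0]
        omega
      · by_cases hia : i ≤ a + 1
        · simp only [fwd, hedef]
          rw [if_neg (by omega), if_pos hia, if_pos (by omega)]
          congr 1
          omega
        · simp only [fwd, hfdef]
          rw [if_neg (by omega), if_neg hia, if_neg (by omega)]
          congr 1
          omega

lemma card_rec (k n : ℕ) (hk : 1 ≤ k) (hn : 1 ≤ n) :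
    modCatalanNum k n = ∑ a ∈ range n, motzkinNum (k-1) a * modCatalanNum k (n-1-a) := by
  have hcard := Nat.card_eq_of_bijective _ (Fmap_bijective k n hk hn)
  rw [modCatalanNum, ← hcard]
  haveI : ∀ a : Fin n,
      Fintype ({d : ℕ → ℕ // IsTreeDeg a.1 d ∧ ∀ i, i ≤ a.1 → d i ≤ k - 1} ×
        {d : ℕ → ℕ // IsTreeDeg (n - 1 - a.1) d ∧ ∀ i, 1 ≤ i → i ≤ n - 1 - a.1 → d i < k}) :=
    fun a => by
      haveI h1 := finite_treeDeg a.1 (fun d => ∀ i, i ≤ a.1 → d i ≤ k - 1)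
      haveI h2 := finite_treeDeg (n - 1 - a.1) (fun d => ∀ i, 1 ≤ i → i ≤ n - 1 - a.1 → d i < k)
      exact Fintype.ofFinite _
  rw [Nat.card_eq_fintype_card, Fintype.card_sigma, Finset.sum_range]
  apply Finset.sum_congr rfl
  intro a _
  rw [← Nat.card_eq_fintype_card, Nat.card_prod]
  rfl

lemma modCatalanNum_zero (k : ℕ) : modCatalanNum k 0 = 1 := by
  rw [modCatalanNum, Nat.card_eq_one_iff_unique]
  constructor
  · constructor
    rintro ⟨d, hd, -⟩ ⟨d', hd', -⟩
    have hz : ∀ (g : ℕ → ℕ), IsTreeDeg 0 g → ∀ i, g i = 0 := by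
      intro g hg i
      rcases Nat.eq_zero_or_pos i with rfl | hi
      · have := hg.2.1; simpa using this
      · exact hg.1 i hi
    apply Subtype.ext; funext i
    show d i = d' i
    rw [hz d hd i, hz d' hd' i]
  · exact ⟨⟨fun _ => 0, ⟨fun i _ => rfl, by simp, fun i h1 h0 => by omega⟩,
      fun i h1 h0 => by omega⟩⟩

/-- `C_k(z)·(1 - M_{k-1}(z)) = z`. -/
theorem Cgf_mul_one_sub_Mgf (k : ℕ) (hk : 1 ≤ k) :
    Cgf k * (1 - Mgf (k - 1)) = PowerSeries.X := by
  ext m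
  rw [mul_sub, mul_one, map_sub, PowerSeries.coeff_X]
  match m with
  | 0 => simp [Cgf, Mgf, PowerSeries.coeff_mul]
  | 1 =>
    simp [Cgf, Mgf, PowerSeries.coeff_mul, Finset.Nat.sum_antidiagonal_eq_sum_range_succ_mk,
      Finset.sum_range_succ, modCatalanNum_zero]
  | (m+2) =>
    rw [if_neg (by omega), sub_eq_zero]
    rw [PowerSeries.coeff_mul, Finset.Nat.sum_antidiagonal_eq_sum_range_succ_mk]
    rw [Finset.sum_range_succ, Finset.sum_range_succ']
    have hlast : (PowerSeries.coeff (m+2)) (Cgf k) *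
        (PowerSeries.coeff (m+2-(m+2))) (Mgf (k-1)) = 0 := by
      simp [Mgf]
    have hzero : (PowerSeries.coeff 0) (Cgf k) *
        (PowerSeries.coeff (m+2-0)) (Mgf (k-1)) = 0 := by
      simp [Cgf]
    rw [hlast, hzero, add_zero, add_zero]
    have hterm : ∀ i ∈ range (m+1), (PowerSeries.coeff (i+1)) (Cgf k) *
        (PowerSeries.coeff (m+2-(i+1))) (Mgf (k-1))
        = (modCatalanNum k i : ℤ) * (motzkinNum (k-1) (m-i) : ℤ) := by
      intro i hi
      rw [mem_range] at hi
      simp only [Cgf, Mgf, PowerSeries.coeff_mk]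
      rw [if_neg (by omega), if_neg (by omega)]
      have e1 : i + 1 - 1 = i := by omega
      have e2 : m + 2 - (i+1) - 1 = m - i := by omega
      rw [e1, e2]
    rw [Finset.sum_congr rfl hterm]
    have hrec := card_rec k (m+1) hk (by omega)
    have hrec' : modCatalanNum k (m+1)
        = ∑ a ∈ range (m+1), motzkinNum (k-1) a * modCatalanNum k (m-a) := by
      rw [hrec]
      apply Finset.sum_congr rfl
      intro a _
      rfl
    have hrefl : ∑ a ∈ range (m+1), motzkinNum (k-1) a * modCatalanNum k (m-a)
        = ∑ a ∈ range (m+1), motzkinNum (k-1) (m-a) * modCatalanNum k a := by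
      rw [← Finset.sum_range_reflect]
      apply Finset.sum_congr rfl
      intro a ha
      rw [mem_range] at ha
      have e1 : m + 1 - 1 - a = m - a := by omega
      have e2 : m - (m - a) = a := by omega
      rw [e1, e2]
    rw [Cgf, PowerSeries.coeff_mk, if_neg (by omega)]
    have e3 : m + 2 - 1 = m + 1 := by omega
    rw [e3, hrec', hrefl]
    push_cast
    apply Finset.sum_congr rfl
    intro a _
    ring
end

section
/- The generating function C_k(z) = Σ_{n≥0} C_{k,n} z^{n+1} of the modular Catalan numbers satisfies the polynomial equation (C_k(z) - z)^k - C_k(z)^k + C_k(z)^{k-1} - z·C_k(z)^{k-2} = 0, for k ≥ 2. -/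
namespace CgfAux

open Finset

/-! ### Generalities -/

lemma sum_range_add' (f : ℕ → ℕ) (a b : ℕ) :
    ∑ i ∈ range (a + b), f i = ∑ i ∈ range a, f i + ∑ i ∈ range b, f (a + i) := by
  induction b with
  | zero => simp
  | succ b ih =>
      rw [show a + (b + 1) = (a + b) + 1 by omega, sum_range_succ, ih, sum_range_succ]
      omega

lemma treeLe {n : ℕ} {d : ℕ → ℕ} (h : IsTreeDeg n d) (i : ℕ) : d i ≤ n := by
  rcases le_or_gt i n with hi | hi
  · calc d i ≤ ∑ j ∈ range (n + 1), d j :=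
        Finset.single_le_sum (fun j _ => Nat.zero_le _) (mem_range.2 (by omega))
      _ = n := h.2.1
  · rw [h.1 i hi]; exact Nat.zero_le n

lemma finite_of (n : ℕ) (P : (ℕ → ℕ) → Prop) (hP : ∀ d, P d → IsTreeDeg n d) :
    Finite {d : ℕ → ℕ // P d} := by
  apply Finite.of_injective (fun d : {d : ℕ → ℕ // P d} =>
    (fun i : Fin (n + 1) => (⟨d.1 i.1, Nat.lt_succ_of_le (treeLe (hP _ d.2) i.1)⟩ : Fin (n + 1))))
  intro d e h
  apply Subtype.ext; funext i
  rcases le_or_gt i n with hi | hi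
  · have := congrFun h ⟨i, by omega⟩
    simpa using this
  · rw [(hP _ d.2).1 i hi, (hP _ e.2).1 i hi]

lemma nat_card_sigma {N : ℕ} (α : Fin N → Type) [inst : ∀ i, Finite (α i)] :
    Nat.card (Σ i, α i) = ∑ i, Nat.card (α i) := by
  letI : ∀ i, Fintype (α i) := fun i => Fintype.ofFinite _
  simp [Nat.card_eq_fintype_card]

lemma card_partition (N : ℕ) (P : (ℕ → ℕ) → Prop) (hfin : Finite {d : ℕ → ℕ // P d})
    (hN : ∀ d, P d → d 0 < N) :
    Nat.card {d : ℕ → ℕ // P d} =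
      ∑ r ∈ range N, Nat.card {d : ℕ → ℕ // P d ∧ d 0 = r} := by
  haveI := hfin
  haveI : ∀ r : ℕ, Finite {d : ℕ → ℕ // P d ∧ d 0 = r} := fun r =>
    Finite.of_injective
      (fun d : {d : ℕ → ℕ // P d ∧ d 0 = r} => (⟨d.1, d.2.1⟩ : {d : ℕ → ℕ // P d}))
      (by intro x y h
          apply Subtype.ext
          have : ((⟨x.1, x.2.1⟩ : {d : ℕ → ℕ // P d})).1 = ((⟨y.1, y.2.1⟩ : {d : ℕ → ℕ // P d})).1 :=
            congrArg Subtype.val h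
          exact this)
  have e : {d : ℕ → ℕ // P d} ≃ Σ r : Fin N, {d : ℕ → ℕ // P d ∧ d 0 = r.1} :=
    { toFun := fun d => ⟨⟨d.1 0, hN _ d.2⟩, ⟨d.1, d.2, rfl⟩⟩
      invFun := fun x => ⟨x.2.1, x.2.2.1⟩
      left_inv := fun d => rfl
      right_inv := by
        rintro ⟨r, d, hd, h0⟩
        have hh : (⟨d 0, hN _ hd⟩ : Fin N) = r := Fin.ext h0
        subst hh
        rfl }
  rw [Nat.card_congr e, nat_card_sigma]
  exact Fin.sum_univ_eq_sum_range (fun r => Nat.card {d : ℕ → ℕ // P d ∧ d 0 = r}) N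

/-! ### The two families of counts -/

/-- trees with `n+1` nodes, root degree exactly `r`, non-root degrees `< k`. -/
def AProp (k n r : ℕ) (d : ℕ → ℕ) : Prop :=
  IsTreeDeg n d ∧ d 0 = r ∧ ∀ i, 1 ≤ i → i ≤ n → d i < k

/-- trees with `n+1` nodes, all degrees `< k`. -/
def BProp (k n : ℕ) (d : ℕ → ℕ) : Prop :=
  IsTreeDeg n d ∧ ∀ i, i ≤ n → d i < k

noncomputable def a (k n r : ℕ) : ℕ := Nat.card {d : ℕ → ℕ // AProp k n r d}
noncomputable def b (k n : ℕ) : ℕ := Nat.card {d : ℕ → ℕ // BProp k n d}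

instance finA (k n r : ℕ) : Finite {d : ℕ → ℕ // AProp k n r d} :=
  finite_of n _ (fun _ h => h.1)

instance finB (k n : ℕ) : Finite {d : ℕ → ℕ // BProp k n d} :=
  finite_of n _ (fun _ h => h.1)

lemma zero_tree : IsTreeDeg 0 (fun _ => 0) :=
  ⟨fun _ _ => rfl, by simp, fun i h1 h2 => by omega⟩

lemma tree_zero_eq {d : ℕ → ℕ} (h : IsTreeDeg 0 d) : d = fun _ => 0 := by
  funext i
  rcases Nat.eq_zero_or_pos i with hi | hi
  · subst hi
    have := h.2.1
    simpa using this
  · exact h.1 i hi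

lemma a_zero_zero (k : ℕ) : a k 0 0 = 1 := by
  rw [a, Nat.card_eq_one_iff_unique]
  refine ⟨⟨fun x y => ?_⟩, ⟨⟨fun _ => 0, zero_tree, rfl, fun i h1 h2 => by omega⟩⟩⟩
  apply Subtype.ext
  rw [tree_zero_eq x.2.1, tree_zero_eq y.2.1]

lemma a_succ_zero (k n : ℕ) : a k (n + 1) 0 = 0 := by
  rw [a, Nat.card_eq_zero]
  left
  constructor
  rintro ⟨d, hd, h0, _⟩
  have h1 := hd.2.2 1 le_rfl (by omega)
  simp [h0] at h1

lemma a_zero_succ (k r : ℕ) : a k 0 (r + 1) = 0 := by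
  rw [a, Nat.card_eq_zero]
  left
  constructor
  rintro ⟨d, hd, h0, _⟩
  have := tree_zero_eq hd
  rw [this] at h0
  simp at h0

lemma cnum_zero (k : ℕ) : modCatalanNum k 0 = 1 := by
  rw [modCatalanNum, Nat.card_eq_one_iff_unique]
  refine ⟨⟨fun x y => ?_⟩, ⟨⟨fun _ => 0, zero_tree, fun i h1 h2 => by omega⟩⟩⟩
  apply Subtype.ext
  rw [tree_zero_eq x.2.1, tree_zero_eq y.2.1]

/-- partition of modular Catalan trees by root degree -/
lemma cnum_eq (k n N : ℕ) (hN : n < N) :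
    modCatalanNum k n = ∑ r ∈ range N, a k n r := by
  rw [modCatalanNum,
    card_partition N _ (finite_of n _ (fun _ h => h.1)) (fun d hd => by
      have := treeLe hd.1 0; omega)]
  apply Finset.sum_congr rfl
  intro r _
  apply Nat.card_congr
  exact Equiv.subtypeEquivRight (fun d => by
    unfold AProp; tauto)

/-- partition of `< k`-bounded trees by root degree -/
lemma bnum_eq (k n : ℕ) : b k n = ∑ r ∈ range k, a k n r := by
  rw [b, card_partition k _ (finB k n) (fun d hd => hd.2 0 (Nat.zero_le _))]
  apply Finset.sum_congr rfl
  intro r hr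
  rw [mem_range] at hr
  apply Nat.card_congr
  apply Equiv.subtypeEquivRight
  intro d
  constructor
  · rintro ⟨⟨hd, hb⟩, h0⟩
    exact ⟨hd, h0, fun i h1 h2 => hb i h2⟩
  · rintro ⟨hd, h0, hb⟩
    refine ⟨⟨hd, fun i hi => ?_⟩, h0⟩
    rcases Nat.eq_zero_or_pos i with h | h
    · subst h; omega
    · exact hb i h hi

/-! ### The main bijection : removing the last subtree of the root -/

/-- Glue a tree with root degree `r` (given by `d'`, with `p+1` nodes) and another
tree `e` (the new last subtree of the root) into a tree with root degree `r+1`. -/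
def glue (r p : ℕ) (d' e : ℕ → ℕ) : ℕ → ℕ :=
  fun i => if i = 0 then r + 1 else if i ≤ p then d' i else e (i - (p + 1))

section Glue

variable {k n r p : ℕ} {d' e : ℕ → ℕ}

lemma sum_glue_lo (hd0 : d' 0 = r) (i : ℕ) (hi : i ≤ p + 1) :
    ∑ j ∈ range i, glue r p d' e j = (if i = 0 then 0 else 1) + ∑ j ∈ range i, d' j := by
  rcases Nat.eq_zero_or_pos i with h | h
  · subst h; simp
  · obtain ⟨m, rfl⟩ : ∃ m, i = m + 1 := ⟨i - 1, by omega⟩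
    rw [if_neg (by omega), Finset.sum_range_succ', Finset.sum_range_succ' d']
    have hc : ∀ j ∈ range m, glue r p d' e (j + 1) = d' (j + 1) := by
      intro j hj
      rw [mem_range] at hj
      unfold glue
      rw [if_neg (by omega), if_pos (by omega)]
    rw [Finset.sum_congr rfl hc]
    have : glue r p d' e 0 = r + 1 := by unfold glue; simp
    rw [this, hd0]
    omega

lemma sum_glue_hi (hd0 : d' 0 = r) (hsum : ∑ j ∈ range (p + 1), d' j = p) (m : ℕ) :
    ∑ j ∈ range (p + 1 + m), glue r p d' e j = (p + 1) + ∑ j ∈ range m, e j := by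
  rw [sum_range_add', sum_glue_lo hd0 (p + 1) le_rfl, if_neg (by omega), hsum]
  have hc : ∀ j ∈ range m, glue r p d' e (p + 1 + j) = e j := by
    intro j hj
    unfold glue
    rw [if_neg (by omega), if_neg (by omega)]
    congr 1
    omega
  rw [Finset.sum_congr rfl hc]
  have : (range m).sum e = ∑ j ∈ range m, e j := rfl
  omega

lemma glue_prop (hp : p ≤ n) (hd' : AProp k p r d') (he : BProp k (n - p) e) :
    AProp k (n + 1) (r + 1) (glue r p d' e) := by
  obtain ⟨⟨hsupp, hsum, hpart⟩, hd0, hbd⟩ := hd'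
  obtain ⟨⟨hsupp', hsum', hpart'⟩, hbd'⟩ := he
  refine ⟨⟨?_, ?_, ?_⟩, ?_, ?_⟩
  · -- support
    intro i hi
    unfold glue
    rw [if_neg (by omega), if_neg (by omega)]
    exact hsupp' _ (by omega)
  · -- total sum
    have h1 : (n + 1) + 1 = p + 1 + (n - p + 1) := by omega
    rw [h1, sum_glue_hi hd0 hsum, hsum']
    omega
  · -- partial sums
    intro i h1 h2
    rcases le_or_gt i (p + 1) with hip | hip
    · rw [sum_glue_lo hd0 i hip, if_neg (by omega)]
      rcases Nat.lt_or_ge i (p + 1) with h | h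
      · have := hpart i h1 (by omega)
        omega
      · have : i = p + 1 := by omega
        subst this
        rw [hsum]
        omega
    · obtain ⟨m, rfl⟩ : ∃ m, i = p + 1 + m := ⟨i - (p + 1), by omega⟩
      rw [sum_glue_hi hd0 hsum]
      have := hpart' m (by omega) (by omega)
      omega
  · unfold glue; simp
  · -- degree bounds
    intro i h1 h2
    unfold glue
    rw [if_neg (by omega)]
    rcases le_or_gt i p with h | h
    · rw [if_pos h]
      exact hbd i h1 h
    · rw [if_neg (by omega)]
      exact hbd' _ (by omega)

lemma glue_partial_gt (hd' : AProp k p r d') (i : ℕ) (h1 : 1 ≤ i) (h2 : i ≤ p) :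
    i + 1 ≤ ∑ j ∈ range i, glue r p d' e j := by
  rw [sum_glue_lo hd'.2.1 i (by omega), if_neg (by omega)]
  have := hd'.1.2.2 i h1 h2
  omega

lemma glue_partial_eq (hd' : AProp k p r d') :
    ∑ j ∈ range (p + 1), glue r p d' e j = p + 1 := by
  rw [sum_glue_lo hd'.2.1 (p + 1) le_rfl, if_neg (by omega), hd'.1.2.1]
  omega

end Glue

/-- The key recursion: a tree with root degree `r+1` decomposes uniquely into a tree
with root degree `r` and a last subtree all of whose degrees are `< k`. -/
lemma a_rec (k n r : ℕ) :
    a k (n + 1) (r + 1) = ∑ p ∈ range (n + 1), a k p r * b k (n - p) := by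
  classical
  -- the sigma type
  let σ := Σ p : Fin (n + 1), {d : ℕ → ℕ // AProp k p.1 r d} × {e : ℕ → ℕ // BProp k (n - p.1) e}
  have key : Nat.card σ = Nat.card {d : ℕ → ℕ // AProp k (n + 1) (r + 1) d} := by
    refine Nat.card_eq_of_bijective
      (fun x => ⟨glue r x.1.1 x.2.1.1 x.2.2.1,
        glue_prop (Nat.lt_succ_iff.mp x.1.2) x.2.1.2 x.2.2.2⟩) ⟨?_, ?_⟩
    · -- injective
      rintro ⟨⟨p, hp⟩, ⟨d1, hd1⟩, ⟨e1, he1⟩⟩ ⟨⟨q, hq⟩, ⟨d2, hd2⟩, ⟨e2, he2⟩⟩ hfe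
      simp only [Fin.val_mk] at hfe hd1 hd2 he1 he2
      have hg : glue r p d1 e1 = glue r q d2 e2 := congrArg Subtype.val hfe
      have hpq : p = q := by
        by_contra hne
        rcases Nat.lt_or_ge p q with h | h
        · have h1 := glue_partial_eq (e := e1) hd1
          have h2 := glue_partial_gt (e := e2) hd2 (p + 1) (by omega) (by omega)
          rw [hg] at h1
          omega
        · have hqp : q < p := by omega
          have h1 := glue_partial_eq (e := e2) hd2
          have h2 := glue_partial_gt (e := e1) hd1 (q + 1) (by omega) (by omega)
          rw [hg] at h2
          omega
      subst hpq
      have hd : d1 = d2 := by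
        funext i
        rcases Nat.eq_zero_or_pos i with h | h
        · subst h; rw [hd1.2.1, hd2.2.1]
        rcases le_or_gt i p with h2 | h2
        · have e1' : glue r p d1 e1 i = d1 i := by
            unfold glue; rw [if_neg (by omega), if_pos h2]
          have e2' : glue r p d2 e2 i = d2 i := by
            unfold glue; rw [if_neg (by omega), if_pos h2]
          rw [← e1', ← e2', hg]
        · rw [hd1.1.1 i h2, hd2.1.1 i h2]
      subst hd
      have hee : e1 = e2 := by
        funext j
        have e1' : glue r p d1 e1 (p + 1 + j) = e1 j := by
          unfold glue; rw [if_neg (by omega), if_neg (by omega)]; congr 1; omega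
        have e2' : glue r p d1 e2 (p + 1 + j) = e2 j := by
          unfold glue; rw [if_neg (by omega), if_neg (by omega)]; congr 1; omega
        rw [← e1', ← e2', hg]
      subst hee
      rfl
    · -- surjective
      rintro ⟨d, hd⟩
      obtain ⟨⟨hsupp, hsum, hpart⟩, hd0, hbd⟩ := hd
      have hS1 : ∑ j ∈ range (n + 1), d j + d (n + 1) = n + 1 := by
        rw [← Finset.sum_range_succ]; exact hsum
      have hS2 : ∑ j ∈ range (n + 1), d j = n + 1 := by
        have h2 := hpart (n + 1) (by omega) le_rfl; omega
      have hStot : ∑ j ∈ range (n + 2), d j = n + 1 := hsum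
      have hex : ∃ i, 1 ≤ i ∧ ∑ j ∈ range i, d j = i := ⟨n + 1, by omega, hS2⟩
      have hex2 : ∃ t, (1 ≤ t ∧ ∑ j ∈ range t, d j = t) ∧
          ∀ i, 1 ≤ i → i < t → ∑ j ∈ range i, d j ≠ i := by
        refine ⟨Nat.find hex, Nat.find_spec hex, ?_⟩
        intro i h1 h2 hcontra
        exact Nat.find_min hex h2 ⟨h1, hcontra⟩
      obtain ⟨t, ⟨ht1, ht2⟩, htmin0⟩ := hex2
      have htle : t ≤ n + 1 := by
        by_contra hgt
        exact htmin0 (n + 1) (by omega) (by omega) hS2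
      have htmin : ∀ i, 1 ≤ i → i < t → i + 1 ≤ ∑ j ∈ range i, d j := by
        intro i h1 h2
        have h3 := hpart i h1 (by omega)
        have h4 := htmin0 i h1 h2
        omega
      have hrt : r + 1 ≤ ∑ j ∈ range t, d j := by
        calc r + 1 = d 0 := hd0.symm
        _ ≤ ∑ j ∈ range t, d j :=
          Finset.single_le_sum (fun j _ => Nat.zero_le _) (mem_range.2 (by omega))
      set p := t - 1 with hpdef
      have hpt : t = p + 1 := by omega
      have hple : p ≤ n := by omega
      -- the two pieces
      set d' : ℕ → ℕ := fun i => if i = 0 then r else if i ≤ p then d i else 0 with hd'def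
      set ee : ℕ → ℕ := fun j => d (t + j) with heedef
      have hsum_d'_aux : ∀ i, 1 ≤ i → i ≤ p + 1 →
          1 + ∑ j ∈ range i, d' j = ∑ j ∈ range i, d j := by
        intro i h1 h2
        obtain ⟨m, rfl⟩ : ∃ m, i = m + 1 := ⟨i - 1, by omega⟩
        rw [Finset.sum_range_succ', Finset.sum_range_succ' d]
        have hc : ∀ j ∈ range m, d' (j + 1) = d (j + 1) := by
          intro j hj
          rw [mem_range] at hj
          show (if j + 1 = 0 then r else if j + 1 ≤ p then d (j + 1) else 0) = d (j + 1)
          rw [if_neg (by omega), if_pos (by omega)]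
        rw [Finset.sum_congr rfl hc]
        have h0 : d' 0 = r := by simp [hd'def]
        rw [h0, hd0]
        omega
      have hA : AProp k p r d' := by
        refine ⟨⟨?_, ?_, ?_⟩, ?_, ?_⟩
        · intro i hi
          show (if i = 0 then r else if i ≤ p then d i else 0) = 0
          rw [if_neg (by omega), if_neg (by omega)]
        · have h := hsum_d'_aux (p + 1) (by omega) le_rfl
          have ht2' : ∑ j ∈ range (p + 1), d j = p + 1 := by rw [← hpt]; exact ht2
          omega
        · intro i h1 h2
          have := hsum_d'_aux i h1 (by omega)
          have h3 := htmin i h1 (by omega)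
          omega
        · simp [hd'def]
        · intro i h1 h2
          show (if i = 0 then r else if i ≤ p then d i else 0) < k
          rw [if_neg (by omega), if_pos h2]
          exact hbd i h1 (by omega)
      have hsum_ee : ∀ m, ∑ j ∈ range m, ee j = ∑ j ∈ range (t + m), d j - t := by
        intro m
        rw [sum_range_add' d t m]
        have hmono : ∑ j ∈ range t, d j = t := ht2
        simp only [heedef]
        omega
      have hB : BProp k (n - p) ee := by
        refine ⟨⟨?_, ?_, ?_⟩, ?_⟩
        · intro j hj
          show d (t + j) = 0
          exact hsupp _ (by omega)
        · have h1 := hsum_ee (n - p + 1)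
          have h2 : t + (n - p + 1) = n + 2 := by omega
          rw [h2] at h1
          rw [h1, hStot]
          omega
        · intro i h1 h2
          have h3 := hsum_ee i
          have h4 := hpart (t + i) (by omega) (by omega)
          have h5 : ∑ j ∈ range t, d j ≤ ∑ j ∈ range (t + i), d j := by
            rw [sum_range_add' d t i]
            omega
          omega
        · intro i hi
          show d (t + i) < k
          exact hbd (t + i) (by omega) (by omega)
      refine ⟨⟨⟨p, by omega⟩, ⟨d', hA⟩, ⟨ee, hB⟩⟩, ?_⟩
      apply Subtype.ext
      funext i
      show glue r p d' ee i = d i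
      unfold glue
      rcases Nat.eq_zero_or_pos i with h | h
      · subst h; rw [if_pos rfl, hd0]
      rw [if_neg (by omega)]
      rcases le_or_gt i p with h2 | h2
      · rw [if_pos h2]
        show (if i = 0 then r else if i ≤ p then d i else 0) = d i
        rw [if_neg (by omega), if_pos h2]
      · rw [if_neg (by omega)]
        show d (t + (i - (p + 1))) = d i
        congr 1
        omega
  -- now compute the cardinality of σ
  rw [a, ← key]
  haveI : ∀ q : Fin (n + 1),
      Finite ({d : ℕ → ℕ // AProp k q.1 r d} × {e : ℕ → ℕ // BProp k (n - q.1) e}) :=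
    fun q => inferInstance
  rw [nat_card_sigma]
  have := Fin.sum_univ_eq_sum_range
    (fun p => Nat.card ({d : ℕ → ℕ // AProp k p r d} × {e : ℕ → ℕ // BProp k (n - p) e})) (n + 1)
  rw [this]
  apply Finset.sum_congr rfl
  intro p _
  rw [Nat.card_prod]
  rfl

/-- the Catalan-count recursion -/
lemma cnum_succ (k n : ℕ) :
    modCatalanNum k (n + 1) = ∑ p ∈ range (n + 1), modCatalanNum k p * b k (n - p) := by
  rw [cnum_eq k (n + 1) (n + 2) (by omega), Finset.sum_range_succ']
  rw [a_succ_zero]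
  have h1 : ∀ r ∈ range (n + 1), a k (n + 1) (r + 1) = ∑ p ∈ range (n + 1), a k p r * b k (n - p) :=
    fun r _ => a_rec k n r
  rw [Finset.sum_congr rfl h1, Finset.sum_comm]
  rw [Nat.add_zero]
  apply Finset.sum_congr rfl
  intro p hp
  rw [mem_range] at hp
  rw [← Finset.sum_mul, ← cnum_eq k p (n + 1) (by omega)]

/-! ### Power series -/

open PowerSeries

noncomputable def Tgf (k r : ℕ) : PowerSeries ℤ :=
  PowerSeries.mk fun m => if m = 0 then 0 else (a k (m - 1) r : ℤ)

noncomputable def Bgf (k : ℕ) : PowerSeries ℤ :=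
  PowerSeries.mk fun m => if m = 0 then 0 else (b k (m - 1) : ℤ)

lemma Tgf_zero (k : ℕ) : Tgf k 0 = PowerSeries.X := by
  ext m
  rw [Tgf, coeff_mk, PowerSeries.coeff_X]
  match m with
  | 0 => simp
  | 1 => simp [a_zero_zero]
  | (m + 2) => simp [a_succ_zero]

/-- convolution helper: the generic coefficient computation for products of two
power series both divisible by `X`. -/
lemma conv_helper (f g : ℕ → ℤ) (m : ℕ) :
    ∑ q ∈ range ((m + 2) + 1),
        (if q = 0 then 0 else f (q - 1)) * (if m + 2 - q = 0 then 0 else g (m + 2 - q - 1))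
      = ∑ q ∈ range (m + 1), f q * g (m - q) := by
  rw [Finset.sum_range_succ, Finset.sum_range_succ']
  have h1 : (if (0:ℕ) = 0 then (0:ℤ) else f (0 - 1)) *
      (if m + 2 - 0 = 0 then (0:ℤ) else g (m + 2 - 0 - 1)) = 0 := by
    simp
  have h2 : (if (m + 2 : ℕ) = 0 then (0:ℤ) else f (m + 2 - 1)) *
      (if m + 2 - (m + 2) = 0 then (0:ℤ) else g (m + 2 - (m + 2) - 1)) = 0 := by
    simp
  rw [h1, h2, add_zero, add_zero]
  apply Finset.sum_congr rfl
  intro q hq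
  rw [mem_range] at hq
  rw [if_neg (by omega), if_neg (by omega),
    show q + 1 - 1 = q from rfl, show m + 2 - (q + 1) - 1 = m - q by omega]

lemma Tgf_succ (k r : ℕ) : Tgf k (r + 1) = Tgf k r * Bgf k := by
  ext m
  rw [PowerSeries.coeff_mul, Finset.Nat.sum_antidiagonal_eq_sum_range_succ_mk]
  simp only [Tgf, Bgf, coeff_mk]
  match m with
  | 0 => simp
  | 1 =>
      rw [if_neg one_ne_zero, show (1:ℕ) - 1 = 0 from rfl, a_zero_succ]
      have h0 : ∑ x ∈ range (Nat.succ 1),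
          (if x = 0 then (0:ℤ) else (a k (x - 1) r : ℤ)) *
            (if 1 - x = 0 then (0:ℤ) else (b k (1 - x - 1) : ℤ)) = 0 := by
        rw [show Nat.succ 1 = 1 + 1 from rfl, Finset.sum_range_succ, Finset.sum_range_one]
        norm_num
      rw [h0]
      norm_num
  | (m + 2) =>
      rw [if_neg (by omega), show m + 2 - 1 = m + 1 from rfl, a_rec k m r]
      have H := conv_helper (fun q => (a k q r : ℤ)) (fun q => (b k q : ℤ)) m
      push_cast
      exact H.symm

lemma Tgf_eq (k r : ℕ) : Tgf k r = PowerSeries.X * (Bgf k) ^ r := by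
  induction r with
  | zero => simpa using Tgf_zero k
  | succ r ih =>
      rw [Tgf_succ, ih]
      ring

lemma Bgf_eq (k : ℕ) : Bgf k = ∑ r ∈ range k, Tgf k r := by
  ext m
  rw [Bgf, coeff_mk, map_sum]
  simp only [Tgf, coeff_mk]
  match m with
  | 0 => simp
  | (m + 1) =>
      rw [if_neg (by omega), Finset.sum_congr rfl
        (fun r _ => if_neg (Nat.succ_ne_zero m) (c := m + 1 = 0))]
      rw [show m + 1 - 1 = m by omega, bnum_eq k m]
      push_cast
      rfl

lemma Cgf_eq (k : ℕ) : Cgf k = PowerSeries.X + Cgf k * Bgf k := by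
  ext m
  rw [map_add, PowerSeries.coeff_mul, Finset.Nat.sum_antidiagonal_eq_sum_range_succ_mk,
    PowerSeries.coeff_X]
  simp only [Cgf, Bgf, coeff_mk]
  match m with
  | 0 => simp
  | 1 =>
      rw [if_neg one_ne_zero, if_pos rfl, show (1:ℕ) - 1 = 0 from rfl, cnum_zero]
      have h0 : ∑ x ∈ range (Nat.succ 1),
          (if x = 0 then (0:ℤ) else (modCatalanNum k (x - 1) : ℤ)) *
            (if 1 - x = 0 then (0:ℤ) else (b k (1 - x - 1) : ℤ)) = 0 := by
        rw [show Nat.succ 1 = 1 + 1 from rfl, Finset.sum_range_succ, Finset.sum_range_one]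
        norm_num
      rw [h0]
      norm_num
  | (m + 2) =>
      rw [if_neg (by omega), if_neg (by omega), show m + 2 - 1 = m + 1 from rfl, cnum_succ k m]
      have H := conv_helper (fun q => (modCatalanNum k q : ℤ)) (fun q => (b k q : ℤ)) m
      push_cast
      rw [zero_add]
      exact H.symm

lemma Bgf_geom (k : ℕ) : Bgf k = PowerSeries.X * ∑ r ∈ range k, (Bgf k) ^ r := by
  conv_lhs => rw [Bgf_eq]
  rw [Finset.mul_sum]
  apply Finset.sum_congr rfl
  intro r _
  rw [Tgf_eq]

lemma one_sub_B_ne (k : ℕ) : (1 : PowerSeries ℤ) - Bgf k ≠ 0 := by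
  intro h
  have := congrArg (PowerSeries.constantCoeff (R := ℤ)) h
  rw [map_sub, map_one] at this
  have hB : PowerSeries.constantCoeff (Bgf k) = 0 := by
    rw [Bgf, ← PowerSeries.coeff_zero_eq_constantCoeff, coeff_mk]
    simp
  rw [hB] at this
  simp at this

lemma key_identity (k : ℕ) : Bgf k = Cgf k * (1 - (Bgf k) ^ k) := by
  have h1 : Cgf k * (1 - Bgf k) = PowerSeries.X := by
    linear_combination Cgf_eq k
  have h2 : Bgf k * (1 - Bgf k) = PowerSeries.X * (1 - (Bgf k) ^ k) := by
    have hgeo := geom_sum_mul (Bgf k) k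
    have hb := Bgf_geom k
    linear_combination (1 - Bgf k) * hb - PowerSeries.X * hgeo
  rw [← h1] at h2
  have h3 : (Bgf k - Cgf k * (1 - (Bgf k) ^ k)) * (1 - Bgf k) = 0 := by
    linear_combination h2
  rcases mul_eq_zero.1 h3 with h | h
  · linear_combination h
  · exact absurd h (one_sub_B_ne k)

end CgfAux

/-- `(C_k(z) - z)^k - C_k(z)^k + C_k(z)^{k-1} - z·C_k(z)^{k-2} = 0` for `k ≥ 2`. -/
theorem Cgf_poly_eq (k : ℕ) (hk : 2 ≤ k) :
    (Cgf k - PowerSeries.X) ^ k - (Cgf k) ^ k + (Cgf k) ^ (k - 1)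
      - PowerSeries.X * (Cgf k) ^ (k - 2) = 0 := by
  obtain ⟨m, rfl⟩ : ∃ m, k = m + 2 := ⟨k - 2, by omega⟩
  have h1 : Cgf (m + 2) - PowerSeries.X = Cgf (m + 2) * CgfAux.Bgf (m + 2) := by
    have := CgfAux.Cgf_eq (m + 2)
    linear_combination this
  have hX : PowerSeries.X = Cgf (m + 2) * (1 - CgfAux.Bgf (m + 2)) := by
    linear_combination - h1
  have h4 := CgfAux.key_identity (m + 2)
  rw [show m + 2 - 1 = m + 1 by omega, show m + 2 - 2 = m by omega, h1, hX]
  linear_combination (Cgf (m + 2)) ^ (m + 1) * h4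
end
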